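/- arXiv:math/0409584 — 3 statements merged into one kernel-verified Lean document; each statement's English description precedes it below -/
import Mathlib

section
/- Let G be an abelian group, H a monoid, φ: H → P' and ψ: H → G morphisms of monoids, and I ⊂ P' an ideal. Then the natural map ℤ[I] ⊗_{ℤ[H]} ℤ[G] → I·ℤ[P' ⊗_H G] is an isomorphism of ℤ[P' ⊗_H G]-modules, where P' ⊗_H G denotes the pushout of monoids and I·ℤ[P'⊗_H G] the ideal generated by the image of I. -/
open scoped TensorProduct

namespace Stmt9Aux

variable {H P' G K : Type*} [CommMonoid H] [CommMonoid P'] [CommGroup G] [CommMonoid K]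
variable (φ : H →* P') (ψ : H →* G)

/-- The congruence on `P' × G` presenting the pushout. -/
def pushCon : Con (P' × G) where
  r a b := ∃ h₁ h₂, a.1 * φ h₁ = b.1 * φ h₂ ∧ a.2 * ψ h₂ = b.2 * ψ h₁
  iseqv := by
    refine ⟨fun a => ⟨1, 1, rfl, rfl⟩, ?_, ?_⟩
    · rintro a b ⟨h₁, h₂, e1, e2⟩; exact ⟨h₂, h₁, e1.symm, e2.symm⟩
    · rintro a b c ⟨h₁, h₂, e1, e2⟩ ⟨k₁, k₂, f1, f2⟩
      refine ⟨h₁ * k₁, h₂ * k₂, ?_, ?_⟩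
      · calc a.1 * φ (h₁ * k₁) = (a.1 * φ h₁) * φ k₁ := by rw [map_mul, mul_assoc]
          _ = (b.1 * φ h₂) * φ k₁ := by rw [e1]
          _ = (b.1 * φ k₁) * φ h₂ := mul_right_comm _ _ _
          _ = (c.1 * φ k₂) * φ h₂ := by rw [f1]
          _ = c.1 * φ (h₂ * k₂) := by rw [map_mul, mul_right_comm, mul_assoc]
      · calc a.2 * ψ (h₂ * k₂) = (a.2 * ψ h₂) * ψ k₂ := by rw [map_mul, mul_assoc]
          _ = (b.2 * ψ h₁) * ψ k₂ := by rw [e2]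
          _ = (b.2 * ψ k₂) * ψ h₁ := mul_right_comm _ _ _
          _ = (c.2 * ψ k₁) * ψ h₁ := by rw [f2]
          _ = c.2 * ψ (h₁ * k₁) := by rw [map_mul, mul_right_comm, mul_assoc]
  mul' := by
    rintro a b c d ⟨h₁, h₂, e1, e2⟩ ⟨k₁, k₂, f1, f2⟩
    refine ⟨h₁ * k₁, h₂ * k₂, ?_, ?_⟩
    · show (a.1 * c.1) * φ (h₁ * k₁) = (b.1 * d.1) * φ (h₂ * k₂)
      rw [map_mul, map_mul, mul_mul_mul_comm a.1 c.1, e1, f1, mul_mul_mul_comm b.1 (φ h₂)]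
    · show (a.2 * c.2) * ψ (h₂ * k₂) = (b.2 * d.2) * ψ (h₁ * k₁)
      rw [map_mul, map_mul, mul_mul_mul_comm a.2 c.2, e2, f2, mul_mul_mul_comm b.2 (ψ h₁)]

variable (ι : P' →* K) (ρ : G →* K) (hcomm : ι.comp φ = ρ.comp ψ)

include hcomm in
lemma hcomm_apply (h : H) : ι (φ h) = ρ (ψ h) := DFunLike.congr_fun hcomm h

include hcomm in
/-- if related then the products in `K` agree -/
lemma pushKer {a b : P' × G} (hab : pushCon φ ψ a b) :
    ι a.1 * ρ a.2 = ι b.1 * ρ b.2 := by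
  obtain ⟨h₁, h₂, e1, e2⟩ := hab
  have E1 : ι a.1 * ρ (ψ h₁) = ι b.1 * ρ (ψ h₂) := by
    rw [← hcomm_apply φ ψ ι ρ hcomm, ← hcomm_apply φ ψ ι ρ hcomm, ← map_mul, ← map_mul, e1]
  have e2' : b.2 = a.2 * ψ h₂ * (ψ h₁)⁻¹ := by
    rw [e2]; group
  symm
  calc ι b.1 * ρ b.2 = ι b.1 * (ρ a.2 * ρ (ψ h₂) * ρ ((ψ h₁)⁻¹)) := by
        rw [e2', map_mul, map_mul]
    _ = (ι b.1 * ρ (ψ h₂)) * ρ a.2 * ρ ((ψ h₁)⁻¹) := by ac_rfl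
    _ = (ι a.1 * ρ (ψ h₁)) * ρ a.2 * ρ ((ψ h₁)⁻¹) := by rw [← E1]
    _ = ι a.1 * ρ a.2 * (ρ (ψ h₁) * ρ ((ψ h₁)⁻¹)) := by ac_rfl
    _ = ι a.1 * ρ a.2 := by rw [← map_mul, mul_inv_cancel, map_one, mul_one]


/-- `P' → L` -/
def pushU : P' →* (pushCon φ ψ).Quotient := (pushCon φ ψ).mk'.comp (MonoidHom.inl P' G)

/-- `G → L` -/
def pushV : G →* (pushCon φ ψ).Quotient := (pushCon φ ψ).mk'.comp (MonoidHom.inr P' G)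

lemma pushUV : (pushU φ ψ).comp φ = (pushV φ ψ).comp ψ := by
  ext h
  show ((pushCon φ ψ).mk' (φ h, 1)) = ((pushCon φ ψ).mk' (1, ψ h))
  exact (Con.eq _).mpr ⟨1, h, by simp, by simp⟩

/-- the multiplication map `P' × G →* K` -/
def pmul : P' × G →* K where
  toFun a := ι a.1 * ρ a.2
  map_one' := by simp
  map_mul' a b := by simp [mul_mul_mul_comm]

include hcomm in
lemma pushCon_le_ker : pushCon φ ψ ≤ Con.ker (pmul ι ρ) := by
  intro a b hab
  exact pushKer φ ψ ι ρ hcomm hab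

/-- `L →* K` -/
def pushToK : (pushCon φ ψ).Quotient →* K :=
  Con.lift _ (pmul ι ρ) (pushCon_le_ker φ ψ ι ρ hcomm)

@[simp] lemma pushToK_mk (a : P' × G) :
    pushToK φ ψ ι ρ hcomm ((pushCon φ ψ).mk' a) = ι a.1 * ρ a.2 := rfl

lemma single_eq_smul_of {M : Type*} [CommMonoid M] (m : M) (c : ℤ) :
    MonoidAlgebra.single m c = c • (MonoidAlgebra.of ℤ M m) := by
  rw [MonoidAlgebra.of_apply, MonoidAlgebra.smul_single, smul_eq_mul, mul_one]

lemma mul_mem_zspan {M : Type*} [CommMonoid M] (T : Set M)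
    (hT : ∀ x ∈ T, ∀ m : M, m * x ∈ T)
    (y : MonoidAlgebra ℤ M) (hy : y ∈ Submodule.span ℤ ((MonoidAlgebra.of ℤ M) '' T))
    (r : MonoidAlgebra ℤ M) :
    r * y ∈ Submodule.span ℤ ((MonoidAlgebra.of ℤ M) '' T) := by
  induction hy using Submodule.span_induction generalizing r with
  | mem a ha =>
    obtain ⟨t, ht, rfl⟩ := ha
    induction r using MonoidAlgebra.induction with
    | zero => simp
    | single_add m c f _ _ ihf =>
      rw [add_mul]
      refine Submodule.add_mem _ ?_ ihf
      have : (MonoidAlgebra.single m c : MonoidAlgebra ℤ M) * (MonoidAlgebra.of ℤ M t)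
          = c • MonoidAlgebra.of ℤ M (m * t) := by
        rw [MonoidAlgebra.of_apply, MonoidAlgebra.single_mul_single, mul_one,
          single_eq_smul_of]
      rw [this]
      exact Submodule.smul_mem _ _ (Submodule.subset_span ⟨m * t, hT t ht m, rfl⟩)
  | zero => simp
  | add a b _ _ iha ihb => rw [mul_add]; exact Submodule.add_mem _ (iha r) (ihb r)
  | smul c a _ ih => rw [mul_smul_comm]; exact Submodule.smul_mem _ _ (ih r)

lemma ideal_span_eq_zspan {M : Type*} [CommMonoid M] (T : Set M)
    (hT : ∀ x ∈ T, ∀ m : M, m * x ∈ T) :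
    (Ideal.span ((MonoidAlgebra.of ℤ M) '' T) : Set (MonoidAlgebra ℤ M)) =
      (Submodule.span ℤ ((MonoidAlgebra.of ℤ M) '' T) : Submodule ℤ (MonoidAlgebra ℤ M)) := by
  ext a
  constructor
  · intro ha
    induction ha using Submodule.span_induction with
    | mem a ha => exact Submodule.subset_span ha
    | zero => simp
    | add a b _ _ iha ihb => exact Submodule.add_mem _ iha ihb
    | smul r a _ ih =>
      rw [smul_eq_mul]
      exact mul_mem_zspan T hT a ih r
  · intro ha
    induction ha using Submodule.span_induction with
    | mem a ha => exact Ideal.subset_span ha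
    | zero => simp
    | add a b _ _ iha ihb => exact Submodule.add_mem _ iha ihb
    | smul c a _ ih => exact Submodule.smul_of_tower_mem _ c ih

lemma mapDomainRingHom_of {M N : Type*} [CommMonoid M] [CommMonoid N] (f : M →* N) (m : M) :
    MonoidAlgebra.mapDomainRingHom ℤ f (MonoidAlgebra.of ℤ M m) = MonoidAlgebra.of ℤ N (f m) := by
  show MonoidAlgebra.mapDomain f (MonoidAlgebra.single m 1) = MonoidAlgebra.single (f m) 1
  exact MonoidAlgebra.mapDomain_single

lemma mapDomainRingHom_fsingle {M N : Type*} [CommMonoid M] [CommMonoid N] (f : M →* N)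
    (m : M) (c : ℤ) :
    MonoidAlgebra.mapDomainRingHom ℤ f (MonoidAlgebra.single m c) = MonoidAlgebra.single (f m) c := by
  show MonoidAlgebra.mapDomain f (MonoidAlgebra.single m c) = MonoidAlgebra.single (f m) c
  exact MonoidAlgebra.mapDomain_single

lemma fsingle_eq_smul_of {M : Type*} [CommMonoid M] (m : M) (c : ℤ) :
    (MonoidAlgebra.single m c : MonoidAlgebra ℤ M) = c • (MonoidAlgebra.of ℤ M m) := by
  rw [MonoidAlgebra.of_apply, MonoidAlgebra.smul_single, smul_eq_mul, mul_one]

lemma fsingle_cast {M : Type*} [CommMonoid M] (m : M) (c : ℤ) :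
    (MonoidAlgebra.single m c : MonoidAlgebra ℤ M) =
      ((c : ℤ) : MonoidAlgebra ℤ M) * MonoidAlgebra.of ℤ M m := by
  rw [MonoidAlgebra.intCast_def, Int.cast_id]
  show MonoidAlgebra.single m c = MonoidAlgebra.single (1 : M) c * MonoidAlgebra.single m 1
  rw [MonoidAlgebra.single_mul_single, one_mul, mul_one]

lemma msingle_cast {M : Type*} [CommMonoid M] (m : M) (c : ℤ) :
    (MonoidAlgebra.single m c : MonoidAlgebra ℤ M) =
      ((c : ℤ) : MonoidAlgebra ℤ M) * MonoidAlgebra.of ℤ M m := fsingle_cast m c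

lemma msingle_eq_smul_of {M : Type*} [CommMonoid M] (m : M) (c : ℤ) :
    (MonoidAlgebra.single m c : MonoidAlgebra ℤ M) = c • (MonoidAlgebra.of ℤ M m) :=
  fsingle_eq_smul_of m c

lemma mapDomainRingHom_msingle {M N : Type*} [CommMonoid M] [CommMonoid N] (f : M →* N)
    (m : M) (c : ℤ) :
    MonoidAlgebra.mapDomainRingHom ℤ f (MonoidAlgebra.single m c) =
      MonoidAlgebra.single (f m) c := mapDomainRingHom_fsingle f m c

lemma malg_induction {M : Type*} [CommMonoid M] {p : MonoidAlgebra ℤ M → Prop}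
    (f : MonoidAlgebra ℤ M) (h0 : p 0)
    (ha : ∀ (m : M) (c : ℤ) (f : MonoidAlgebra ℤ M), c ≠ 0 → p f →
      p (MonoidAlgebra.single m c + f)) : p f := by
  induction f using MonoidAlgebra.induction with
  | zero => exact h0
  | single_add m c f hmf hc ih => exact ha m c f hc ih

/-- setoid on `I × G` induced by the pushout congruence -/
def pushSetoidI (I : Set P') : Setoid (I × G) where
  r a b := pushCon φ ψ (a.1.1, a.2) (b.1.1, b.2)
  iseqv := ⟨fun _ => (pushCon φ ψ).refl _, fun h => (pushCon φ ψ).symm h,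
    fun h h' => (pushCon φ ψ).trans h h'⟩

end Stmt9Aux

set_option maxHeartbeats 1000000 in
set_option synthInstance.maxHeartbeats 400000 in
open Stmt9Aux in
/-- Let `H` be a monoid, `G` an abelian group, `φ : H → P'` and `ψ : H → G` morphisms of
monoids, `(K, ι, ρ)` the pushout `P' ⊗_H G`, and `I ⊆ P'` an ideal.  Then the natural map
`ℤ[I] ⊗_{ℤ[H]} ℤ[G] → I·ℤ[P' ⊗_H G]` is an isomorphism: composed with any ring isomorphism
`e : ℤ[P'] ⊗_{ℤ[H]} ℤ[G] ≃ ℤ[K]` compatible with the natural inclusions, the canonical map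
from `ℤ[I] ⊗_{ℤ[H]} ℤ[G]` is injective with image the ideal generated by `I` in `ℤ[K]`. -/
theorem stmt9 {H P' G K : Type*} [CommMonoid H] [CommMonoid P'] [CommGroup G] [CommMonoid K]
    (φ : H →* P') (ψ : H →* G) (ι : P' →* K) (ρ : G →* K)
    (hcomm : ι.comp φ = ρ.comp ψ)
    (huniv : ∀ (L : Type*) [CommMonoid L], ∀ (u : P' →* L) (v : G →* L),
      u.comp φ = v.comp ψ → ∃! w : K →* L, w.comp ι = u ∧ w.comp ρ = v)
    (I : Set P') (hI : ∀ x ∈ I, ∀ p : P', p * x ∈ I) :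
    letI : Algebra (MonoidAlgebra ℤ H) (MonoidAlgebra ℤ P') :=
      (MonoidAlgebra.mapDomainRingHom ℤ φ).toAlgebra
    letI : Algebra (MonoidAlgebra ℤ H) (MonoidAlgebra ℤ G) :=
      (MonoidAlgebra.mapDomainRingHom ℤ ψ).toAlgebra
    let J : Ideal (MonoidAlgebra ℤ P') := Ideal.span ((MonoidAlgebra.of ℤ P') '' I)
    ∀ e : (MonoidAlgebra ℤ P' ⊗[MonoidAlgebra ℤ H] MonoidAlgebra ℤ G) ≃+* MonoidAlgebra ℤ K,
      (∀ x : MonoidAlgebra ℤ P',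
        e (x ⊗ₜ[MonoidAlgebra ℤ H] (1 : MonoidAlgebra ℤ G)) =
          MonoidAlgebra.mapDomainRingHom ℤ ι x) →
      (∀ y : MonoidAlgebra ℤ G,
        e ((1 : MonoidAlgebra ℤ P') ⊗ₜ[MonoidAlgebra ℤ H] y) =
          MonoidAlgebra.mapDomainRingHom ℤ ρ y) →
      Function.Injective (fun z : ↥(J.restrictScalars (MonoidAlgebra ℤ H))
            ⊗[MonoidAlgebra ℤ H] MonoidAlgebra ℤ G =>
          e (LinearMap.rTensor (MonoidAlgebra ℤ G)
              (Submodule.subtype (J.restrictScalars (MonoidAlgebra ℤ H))) z)) ∧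
      Set.range (fun z : ↥(J.restrictScalars (MonoidAlgebra ℤ H))
            ⊗[MonoidAlgebra ℤ H] MonoidAlgebra ℤ G =>
          e (LinearMap.rTensor (MonoidAlgebra ℤ G)
              (Submodule.subtype (J.restrictScalars (MonoidAlgebra ℤ H))) z)) =
        ↑(Ideal.span ((MonoidAlgebra.of ℤ K) '' (⇑ι '' I))) := by
  intro J e he1 he2
  letI : Algebra (MonoidAlgebra ℤ H) (MonoidAlgebra ℤ P') :=
    (MonoidAlgebra.mapDomainRingHom ℤ φ).toAlgebra
  letI : Algebra (MonoidAlgebra ℤ H) (MonoidAlgebra ℤ G) :=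
    (MonoidAlgebra.mapDomainRingHom ℤ ψ).toAlgebra
  -- `e` on pure tensors of basis elements
  have hET : ∀ (p : P') (g : G),
      e ((MonoidAlgebra.of ℤ P' p) ⊗ₜ[MonoidAlgebra ℤ H] (MonoidAlgebra.of ℤ G g)) =
        MonoidAlgebra.of ℤ K (ι p * ρ g) := by
    intro p g
    have h2 : (MonoidAlgebra.of ℤ P' p) ⊗ₜ[MonoidAlgebra ℤ H] (MonoidAlgebra.of ℤ G g) =
        ((MonoidAlgebra.of ℤ P' p) ⊗ₜ[MonoidAlgebra ℤ H] (1 : MonoidAlgebra ℤ G)) *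
        ((1 : MonoidAlgebra ℤ P') ⊗ₜ[MonoidAlgebra ℤ H] (MonoidAlgebra.of ℤ G g)) := by
      rw [Algebra.TensorProduct.tmul_mul_tmul, mul_one, one_mul]
    rw [h2, map_mul, he1, he2, mapDomainRingHom_of ι, mapDomainRingHom_of ρ, ← map_mul]
  -- the algebra structure on the monoid algebra of the model pushout
  letI : Algebra (MonoidAlgebra ℤ H) (MonoidAlgebra ℤ ((pushCon φ ψ).Quotient)) :=
    (MonoidAlgebra.mapDomainRingHom ℤ ((pushU φ ψ).comp φ)).toAlgebra
  let A1 : MonoidAlgebra ℤ P' →ₐ[MonoidAlgebra ℤ H]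
      MonoidAlgebra ℤ ((pushCon φ ψ).Quotient) :=
    { MonoidAlgebra.mapDomainRingHom ℤ (pushU φ ψ) with
      commutes' := fun r => by
        show MonoidAlgebra.mapDomainRingHom ℤ (pushU φ ψ) (MonoidAlgebra.mapDomainRingHom ℤ φ r) =
          MonoidAlgebra.mapDomainRingHom ℤ ((pushU φ ψ).comp φ) r
        rw [MonoidAlgebra.mapDomainRingHom_comp]
        rfl }
  let A2 : MonoidAlgebra ℤ G →ₐ[MonoidAlgebra ℤ H]
      MonoidAlgebra ℤ ((pushCon φ ψ).Quotient) :=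
    { MonoidAlgebra.mapDomainRingHom ℤ (pushV φ ψ) with
      commutes' := fun r => by
        show MonoidAlgebra.mapDomainRingHom ℤ (pushV φ ψ) (MonoidAlgebra.mapDomainRingHom ℤ ψ r) =
          MonoidAlgebra.mapDomainRingHom ℤ ((pushU φ ψ).comp φ) r
        rw [pushUV φ ψ, MonoidAlgebra.mapDomainRingHom_comp]
        rfl }
  let Φ := Algebra.TensorProduct.productMap A1 A2
  have hmk : ∀ (p : P') (g : G),
      (pushU φ ψ) p * (pushV φ ψ) g = (pushCon φ ψ).mk' (p, g) := by
    intro p g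
    show (pushCon φ ψ).mk' (p, 1) * (pushCon φ ψ).mk' (1, g) = _
    rw [← map_mul]
    congr 1
    simp
  have hΦ : ∀ (p : P') (g : G),
      Φ ((MonoidAlgebra.of ℤ P' p) ⊗ₜ[MonoidAlgebra ℤ H] (MonoidAlgebra.of ℤ G g)) =
        MonoidAlgebra.of ℤ ((pushCon φ ψ).Quotient) ((pushCon φ ψ).mk' (p, g)) := by
    intro p g
    rw [show Φ ((MonoidAlgebra.of ℤ P' p) ⊗ₜ[MonoidAlgebra ℤ H] (MonoidAlgebra.of ℤ G g)) =
      A1 (MonoidAlgebra.of ℤ P' p) * A2 (MonoidAlgebra.of ℤ G g) from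
      Algebra.TensorProduct.productMap_apply_tmul A1 A2 _ _]
    show MonoidAlgebra.mapDomainRingHom ℤ (pushU φ ψ) (MonoidAlgebra.of ℤ P' p) *
      MonoidAlgebra.mapDomainRingHom ℤ (pushV φ ψ) (MonoidAlgebra.of ℤ G g) =
      MonoidAlgebra.of ℤ ((pushCon φ ψ).Quotient) ((pushCon φ ψ).mk' (p, g))
    rw [mapDomainRingHom_of (pushU φ ψ), mapDomainRingHom_of (pushV φ ψ), ← map_mul, hmk]
  have hΨΦcore : ∀ (p : P') (g : G),
      MonoidAlgebra.mapDomainRingHom ℤ (pushToK φ ψ ι ρ hcomm) (Φ ((MonoidAlgebra.of ℤ P' p) ⊗ₜ[MonoidAlgebra ℤ H] (MonoidAlgebra.of ℤ G g))) =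
      e ((MonoidAlgebra.of ℤ P' p) ⊗ₜ[MonoidAlgebra ℤ H] (MonoidAlgebra.of ℤ G g)) := by
    intro p g
    rw [hΦ, hET, mapDomainRingHom_of (pushToK φ ψ ι ρ hcomm), pushToK_mk]
  have hgen : ∀ (y : MonoidAlgebra ℤ G) (x : MonoidAlgebra ℤ P'),
      MonoidAlgebra.mapDomainRingHom ℤ (pushToK φ ψ ι ρ hcomm)
        (Φ (x ⊗ₜ[MonoidAlgebra ℤ H] y)) = e (x ⊗ₜ[MonoidAlgebra ℤ H] y) := by
    intro y
    induction y using malg_induction with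
    | h0 =>
      intro x
      rw [TensorProduct.tmul_zero, map_zero, map_zero, map_zero]
    | ha g d f' hd0 ihy =>
      intro x
      rw [TensorProduct.tmul_add, map_add, map_add, map_add, ihy x]
      congr 1
      induction x using malg_induction with
      | h0 => rw [TensorProduct.zero_tmul, map_zero, map_zero, map_zero]
      | ha p c f hc0 ihx =>
        rw [TensorProduct.add_tmul, map_add, map_add, map_add, ihx]
        congr 1
        have hc : ((c : ℤ) : MonoidAlgebra ℤ P' ⊗[MonoidAlgebra ℤ H] MonoidAlgebra ℤ G) =
            ((c : ℤ) : MonoidAlgebra ℤ P') ⊗ₜ[MonoidAlgebra ℤ H] (1 : MonoidAlgebra ℤ G) := by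
          rw [← map_intCast (Algebra.TensorProduct.includeLeftRingHom
            (R := MonoidAlgebra ℤ H) (A := MonoidAlgebra ℤ P')
            (B := MonoidAlgebra ℤ G)) c]
          rw [Algebra.TensorProduct.includeLeftRingHom_apply]
        have hd : ((d : ℤ) : MonoidAlgebra ℤ P' ⊗[MonoidAlgebra ℤ H] MonoidAlgebra ℤ G) =
            (1 : MonoidAlgebra ℤ P') ⊗ₜ[MonoidAlgebra ℤ H] ((d : ℤ) : MonoidAlgebra ℤ G) := by
          rw [← map_intCast (Algebra.TensorProduct.includeRight
            (R := MonoidAlgebra ℤ H) (A := MonoidAlgebra ℤ P')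
            (B := MonoidAlgebra ℤ G)).toRingHom d]
          rw [AlgHom.toRingHom_eq_coe, RingHom.coe_coe,
            Algebra.TensorProduct.includeRight_apply]
        have hx1 : (MonoidAlgebra.single p c) ⊗ₜ[MonoidAlgebra ℤ H]
            (MonoidAlgebra.single g d) =
            ((c : ℤ) : MonoidAlgebra ℤ P' ⊗[MonoidAlgebra ℤ H] MonoidAlgebra ℤ G) *
            (((d : ℤ) : MonoidAlgebra ℤ P' ⊗[MonoidAlgebra ℤ H] MonoidAlgebra ℤ G) *
              ((MonoidAlgebra.of ℤ P' p) ⊗ₜ[MonoidAlgebra ℤ H]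
                (MonoidAlgebra.of ℤ G g))) := by
          rw [msingle_cast, msingle_cast, hc, hd]
          simp [Algebra.TensorProduct.tmul_mul_tmul]
        rw [hx1]
        simp only [map_mul, map_intCast]
        rw [hΨΦcore]
  have hΨΦ : ∀ t, MonoidAlgebra.mapDomainRingHom ℤ (pushToK φ ψ ι ρ hcomm) (Φ t) = e t := by
    intro t
    induction t using TensorProduct.induction_on with
    | zero => simp
    | add u v hu hv => rw [map_add, map_add, map_add, hu, hv]
    | tmul x y => exact hgen y x
  -- surjectivity of the pair map onto K
  have surjK : ∀ k : K, ∃ p g, ι p * ρ g = k := by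
    intro k
    have h2 : MonoidAlgebra.of ℤ K k = MonoidAlgebra.mapDomainRingHom ℤ (pushToK φ ψ ι ρ hcomm) (Φ (e.symm (MonoidAlgebra.of ℤ K k))) := by
      rw [hΨΦ, RingEquiv.apply_symm_apply]
    have h1 : MonoidAlgebra.of ℤ K k ∈ Submodule.span ℤ
        ((MonoidAlgebra.of ℤ K) '' {k : K | ∃ p g, ι p * ρ g = k}) := by
      rw [h2]
      generalize (Φ (e.symm (MonoidAlgebra.of ℤ K k))) = t
      induction t using malg_induction with
      | h0 => rw [map_zero]; exact zero_mem _
      | ha ℓ c f hc ih =>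
        rw [map_add]
        refine add_mem ?_ ih
        rw [mapDomainRingHom_fsingle (pushToK φ ψ ι ρ hcomm) ℓ c, fsingle_eq_smul_of]
        refine Submodule.smul_mem _ _ (Submodule.subset_span ⟨_, ?_, rfl⟩)
        induction ℓ using Quotient.inductionOn with | _ a =>
        exact ⟨a.1, a.2, rfl⟩
    have himg : (⇑(MonoidAlgebra.of ℤ K)) '' {k : K | ∃ p g, ι p * ρ g = k} =
        (fun i => MonoidAlgebra.single i (1 : ℤ)) '' {k : K | ∃ p g, ι p * ρ g = k} := rfl
    rw [himg, ← MonoidAlgebra.supported_eq_span_single] at h1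
    have h3 := MonoidAlgebra.mem_supported.mp h1
    have h4 : k ∈ (MonoidAlgebra.single k (1:ℤ)).coeff.support := by
      rw [MonoidAlgebra.coeff_single, Finsupp.support_single_ne_zero k one_ne_zero]
      exact Finset.mem_singleton_self k
    exact h3 h4
  -- injectivity of the pair map
  have injPair : ∀ (p p' : P') (g g' : G), ι p * ρ g = ι p' * ρ g' →
      pushCon φ ψ (p, g) (p', g') := by
    intro p p' g g' hpg
    have h0 : ∀ (p : P') (g : G),
        Φ (e.symm (MonoidAlgebra.of ℤ K (ι p * ρ g))) =
        MonoidAlgebra.of ℤ ((pushCon φ ψ).Quotient) ((pushCon φ ψ).mk' (p, g)) := by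
      intro p g
      rw [← hET, RingEquiv.symm_apply_apply, hΦ]
    have h1 : MonoidAlgebra.of ℤ ((pushCon φ ψ).Quotient) ((pushCon φ ψ).mk' (p, g)) =
        MonoidAlgebra.of ℤ ((pushCon φ ψ).Quotient) ((pushCon φ ψ).mk' (p', g')) := by
      rw [← h0, ← h0, hpg]
    have h2 : (pushCon φ ψ).mk' (p, g) = (pushCon φ ψ).mk' (p', g') := by
      have := MonoidAlgebra.single_left_injective (M := (pushCon φ ψ).Quotient) (one_ne_zero (α := ℤ))
      exact this h1
    exact (Con.eq _).mp h2
  -- basic membership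
  have memJ' : ∀ x ∈ I, MonoidAlgebra.of ℤ P' x ∈ J.restrictScalars (MonoidAlgebra ℤ H) :=
    fun x hx => Ideal.subset_span ⟨x, hx, rfl⟩
  -- the quotient model for I × G
  let Q := Quotient (pushSetoidI φ ψ I)
  let fbar : Q → K := Quotient.lift (fun a => ι a.1.1 * ρ a.2)
    (fun a b hab => pushKer φ ψ ι ρ hcomm hab)
  have hfbar_inj : Function.Injective fbar := by
    intro q q'
    induction q using Quotient.inductionOn with | _ a =>
    induction q' using Quotient.inductionOn with | _ b =>
    intro hab
    exact Quotient.sound (injPair a.1.1 b.1.1 a.2 b.2 hab)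
  -- smul key lemmas
  have hsmulA : ∀ (h : H) (x : P'),
      (MonoidAlgebra.of ℤ H h) • (MonoidAlgebra.of ℤ P' x) =
        MonoidAlgebra.of ℤ P' (φ h * x) := by
    intro h x
    rw [Algebra.smul_def]
    rw [show (algebraMap (MonoidAlgebra ℤ H) (MonoidAlgebra ℤ P')) =
      MonoidAlgebra.mapDomainRingHom ℤ φ from rfl]
    rw [mapDomainRingHom_of φ, ← map_mul]
  have hsmulB : ∀ (h : H) (g : G),
      (MonoidAlgebra.of ℤ H h) • (MonoidAlgebra.of ℤ G g) =
        MonoidAlgebra.of ℤ G (ψ h * g) := by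
    intro h g
    rw [Algebra.smul_def]
    rw [show (algebraMap (MonoidAlgebra ℤ H) (MonoidAlgebra ℤ G)) =
      MonoidAlgebra.mapDomainRingHom ℤ ψ from rfl]
    rw [mapDomainRingHom_of ψ, ← map_mul]
  -- the key tensor identity
  have key : ∀ (x : P') (hx : x ∈ I) (g : G) (h : H),
      ((⟨MonoidAlgebra.of ℤ P' (φ h * x), memJ' _ (hI x hx (φ h))⟩ :
          ↥(J.restrictScalars (MonoidAlgebra ℤ H))) ⊗ₜ[MonoidAlgebra ℤ H]
        (MonoidAlgebra.of ℤ G (g * (ψ h)⁻¹))) =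
      (⟨MonoidAlgebra.of ℤ P' x, memJ' x hx⟩ :
          ↥(J.restrictScalars (MonoidAlgebra ℤ H))) ⊗ₜ[MonoidAlgebra ℤ H]
        (MonoidAlgebra.of ℤ G g) := by
    intro x hx g h
    have hs : (⟨MonoidAlgebra.of ℤ P' (φ h * x), memJ' _ (hI x hx (φ h))⟩ :
        ↥(J.restrictScalars (MonoidAlgebra ℤ H))) =
        (MonoidAlgebra.of ℤ H h) •
          ⟨MonoidAlgebra.of ℤ P' x, memJ' x hx⟩ :=
      Subtype.ext (by rw [SetLike.val_smul]; exact (hsmulA h x).symm)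
    rw [hs, TensorProduct.smul_tmul, hsmulB]
    congr 1
    have h8 : ψ h * (g * (ψ h)⁻¹) = g := by
      rw [mul_comm g, ← mul_assoc, mul_inv_cancel, one_mul]
    rw [h8]
  -- well-definedness of the tensor assignment on the quotient
  have hwd : ∀ (a b : ↥I × G), (pushSetoidI φ ψ I).r a b →
      ((⟨MonoidAlgebra.of ℤ P' a.1.1, memJ' _ a.1.2⟩ :
          ↥(J.restrictScalars (MonoidAlgebra ℤ H))) ⊗ₜ[MonoidAlgebra ℤ H]
        (MonoidAlgebra.of ℤ G a.2)) =
      ((⟨MonoidAlgebra.of ℤ P' b.1.1, memJ' _ b.1.2⟩ :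
          ↥(J.restrictScalars (MonoidAlgebra ℤ H))) ⊗ₜ[MonoidAlgebra ℤ H]
        (MonoidAlgebra.of ℤ G b.2)) := by
    rintro a b ⟨h₁, h₂, e1, e2⟩
    have E1 : φ h₁ * a.1.1 = φ h₂ * b.1.1 := by
      rw [mul_comm (φ h₁), mul_comm (φ h₂)]; exact e1
    have E2 : a.2 * (ψ h₁)⁻¹ = b.2 * (ψ h₂)⁻¹ := by
      have h3 : a.2 * ψ h₂ = b.2 * ψ h₁ := e2
      have hb : b.2 = a.2 * ψ h₂ * (ψ h₁)⁻¹ := by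
        rw [h3, mul_assoc, mul_inv_cancel, mul_one]
      rw [hb, mul_right_comm a.2 (ψ h₂), mul_assoc, mul_inv_cancel, mul_one]
    calc (⟨MonoidAlgebra.of ℤ P' a.1.1, memJ' _ a.1.2⟩ :
          ↥(J.restrictScalars (MonoidAlgebra ℤ H))) ⊗ₜ[MonoidAlgebra ℤ H]
          (MonoidAlgebra.of ℤ G a.2)
        = (⟨MonoidAlgebra.of ℤ P' (φ h₁ * a.1.1), memJ' _ (hI _ a.1.2 (φ h₁))⟩ :
            ↥(J.restrictScalars (MonoidAlgebra ℤ H))) ⊗ₜ[MonoidAlgebra ℤ H]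
          (MonoidAlgebra.of ℤ G (a.2 * (ψ h₁)⁻¹)) := (key a.1.1 a.1.2 a.2 h₁).symm
      _ = (⟨MonoidAlgebra.of ℤ P' (φ h₂ * b.1.1), memJ' _ (hI _ b.1.2 (φ h₂))⟩ :
            ↥(J.restrictScalars (MonoidAlgebra ℤ H))) ⊗ₜ[MonoidAlgebra ℤ H]
          (MonoidAlgebra.of ℤ G (b.2 * (ψ h₂)⁻¹)) := by
            have hsub : (⟨MonoidAlgebra.of ℤ P' (φ h₁ * a.1.1),
                memJ' _ (hI _ a.1.2 (φ h₁))⟩ :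
                ↥(J.restrictScalars (MonoidAlgebra ℤ H))) =
                ⟨MonoidAlgebra.of ℤ P' (φ h₂ * b.1.1), memJ' _ (hI _ b.1.2 (φ h₂))⟩ :=
              Subtype.ext (by
                show MonoidAlgebra.of ℤ P' (φ h₁ * a.1.1) =
                  MonoidAlgebra.of ℤ P' (φ h₂ * b.1.1)
                rw [E1])
            rw [hsub, E2]
      _ = (⟨MonoidAlgebra.of ℤ P' b.1.1, memJ' _ b.1.2⟩ :
            ↥(J.restrictScalars (MonoidAlgebra ℤ H))) ⊗ₜ[MonoidAlgebra ℤ H]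
          (MonoidAlgebra.of ℤ G b.2) := key b.1.1 b.1.2 b.2 h₂
  -- the map Q → tensor product
  let βfun : Q → (↥(J.restrictScalars (MonoidAlgebra ℤ H)) ⊗[MonoidAlgebra ℤ H]
      MonoidAlgebra ℤ G) :=
    Quotient.lift (fun a => (⟨MonoidAlgebra.of ℤ P' a.1.1, memJ' _ a.1.2⟩ :
        ↥(J.restrictScalars (MonoidAlgebra ℤ H))) ⊗ₜ[MonoidAlgebra ℤ H]
      (MonoidAlgebra.of ℤ G a.2)) hwd
  let β := Finsupp.lift (↥(J.restrictScalars (MonoidAlgebra ℤ H)) ⊗[MonoidAlgebra ℤ H]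
      MonoidAlgebra ℤ G) ℤ Q βfun
  have hβsingle : ∀ (q : Q) (c : ℤ), β (Finsupp.single q c) = c • βfun q := by
    intro q c
    show (Finsupp.single q c).sum (fun q c => c • βfun q) = c • βfun q
    rw [Finsupp.sum_single_index (by rw [zero_smul ℤ])]
  -- the linear version of the main map
  let Fl : (↥(J.restrictScalars (MonoidAlgebra ℤ H)) ⊗[MonoidAlgebra ℤ H]
      MonoidAlgebra ℤ G) →ₗ[ℤ] MonoidAlgebra ℤ K :=
    { toFun := fun z => e (LinearMap.rTensor (MonoidAlgebra ℤ G)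
          (Submodule.subtype (J.restrictScalars (MonoidAlgebra ℤ H))) z)
      map_add' := fun a b => by rw [map_add, map_add]
      map_smul' := fun c a => by
        rw [RingHom.id_apply, LinearMap.map_smul_of_tower]; exact map_zsmul e c _ }
  have hFl : ∀ z, Fl z = e (LinearMap.rTensor (MonoidAlgebra ℤ G)
      (Submodule.subtype (J.restrictScalars (MonoidAlgebra ℤ H))) z) := fun z => rfl
  -- key computation on simple tensors
  have hofx : ∀ (x : P') (hx : x ∈ I) (g : G),
      Fl ((⟨MonoidAlgebra.of ℤ P' x, memJ' x hx⟩ :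
          ↥(J.restrictScalars (MonoidAlgebra ℤ H))) ⊗ₜ[MonoidAlgebra ℤ H]
        (MonoidAlgebra.of ℤ G g)) = MonoidAlgebra.of ℤ K (ι x * ρ g) := by
    intro x hx g
    rw [hFl, LinearMap.rTensor_tmul]
    exact hET x g
  have hFβfun : ∀ q : Q, Fl (βfun q) = MonoidAlgebra.of ℤ K (fbar q) := by
    intro q
    induction q using Quotient.inductionOn with | _ a =>
    exact hofx a.1.1 a.1.2 a.2
  have hFβl : ∀ l : Q →₀ ℤ, Fl (β l) = MonoidAlgebra.ofCoeff (Finsupp.mapDomain fbar l) := by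
    intro l
    induction l using Finsupp.induction with
    | zero => simp
    | single_add q c f hqf hc ih =>
      rw [map_add, Finsupp.mapDomain_add, MonoidAlgebra.ofCoeff_add, map_add, ih, hβsingle, map_smul, hFβfun,
        Finsupp.mapDomain_single, MonoidAlgebra.ofCoeff_single, fsingle_eq_smul_of]
  -- surjectivity of β
  have hle : ∀ a, a ∈ Submodule.span ℤ ((MonoidAlgebra.of ℤ P') '' I) →
      a ∈ J.restrictScalars (MonoidAlgebra ℤ H) := by
    intro a ha
    have h5 : Submodule.span ℤ ((MonoidAlgebra.of ℤ P') '' I) ≤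
        Submodule.restrictScalars ℤ (J.restrictScalars (MonoidAlgebra ℤ H)) :=
      Submodule.span_le.mpr (fun _ hz => by
        obtain ⟨x, hx, rfl⟩ := hz; exact memJ' x hx)
    exact h5 ha
  have surjβ : Function.Surjective β := by
    intro z
    have hz : z ∈ LinearMap.range β := by
      induction z using TensorProduct.induction_on with
      | zero => exact zero_mem _
      | add u v hu hv => exact add_mem hu hv
      | tmul j y =>
        have hjspan : (j : MonoidAlgebra ℤ P') ∈
            Submodule.span ℤ ((MonoidAlgebra.of ℤ P') '' I) := by
          have hj2 : (j : MonoidAlgebra ℤ P') ∈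
              (Ideal.span ((MonoidAlgebra.of ℤ P') '' I) : Set (MonoidAlgebra ℤ P')) := j.2
          rw [ideal_span_eq_zspan I hI] at hj2
          exact hj2
        have main : ∀ a, a ∈ Submodule.span ℤ ((MonoidAlgebra.of ℤ P') '' I) →
            ∀ (h : a ∈ J.restrictScalars (MonoidAlgebra ℤ H)) (y : MonoidAlgebra ℤ G),
            ((⟨a, h⟩ : ↥(J.restrictScalars (MonoidAlgebra ℤ H))) ⊗ₜ[MonoidAlgebra ℤ H] y)
              ∈ LinearMap.range β := by
          intro a ha
          induction ha using Submodule.span_induction with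
          | mem a ha =>
            obtain ⟨x, hx, rfl⟩ := ha
            intro h y
            induction y using malg_induction with
            | h0 =>
              rw [TensorProduct.tmul_zero]
              exact zero_mem _
            | ha g c f hc ihy =>
              rw [TensorProduct.tmul_add]
              refine add_mem ?_ ihy
              have h1 : (MonoidAlgebra.single g c : MonoidAlgebra ℤ G) =
                  c • MonoidAlgebra.of ℤ G g := msingle_eq_smul_of g c
              have h2 : (⟨MonoidAlgebra.of ℤ P' x, h⟩ :
                    ↥(J.restrictScalars (MonoidAlgebra ℤ H))) ⊗ₜ[MonoidAlgebra ℤ H]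
                  (c • MonoidAlgebra.of ℤ G g) =
                  c • ((⟨MonoidAlgebra.of ℤ P' x, h⟩ :
                    ↥(J.restrictScalars (MonoidAlgebra ℤ H))) ⊗ₜ[MonoidAlgebra ℤ H]
                      (MonoidAlgebra.of ℤ G g)) :=
                map_zsmul ((TensorProduct.mk (MonoidAlgebra ℤ H) _ _
                  (⟨MonoidAlgebra.of ℤ P' x, h⟩ :
                    ↥(J.restrictScalars (MonoidAlgebra ℤ H)))).toAddMonoidHom) c _
              rw [h1, h2]
              refine ⟨Finsupp.single (Quotient.mk (pushSetoidI φ ψ I) (⟨x, hx⟩, g)) c, ?_⟩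
              rw [hβsingle]
              rfl
          | zero =>
            intro h y
            have h6 : (⟨0, h⟩ : ↥(J.restrictScalars (MonoidAlgebra ℤ H))) = 0 := rfl
            rw [h6, TensorProduct.zero_tmul]
            exact zero_mem _
          | add a b ha hb iha ihb =>
            intro h y
            have h6 : (⟨a + b, h⟩ : ↥(J.restrictScalars (MonoidAlgebra ℤ H))) =
                ⟨a, hle a ha⟩ + ⟨b, hle b hb⟩ := rfl
            rw [h6, TensorProduct.add_tmul]
            exact add_mem (iha (hle a ha) y) (ihb (hle b hb) y)
          | smul c a ha ih =>
            intro h y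
            have h1 : (⟨c • a, h⟩ : ↥(J.restrictScalars (MonoidAlgebra ℤ H))) =
                c • ⟨a, hle a ha⟩ := rfl
            have h2 : (c • (⟨a, hle a ha⟩ :
                  ↥(J.restrictScalars (MonoidAlgebra ℤ H)))) ⊗ₜ[MonoidAlgebra ℤ H] y =
                c • ((⟨a, hle a ha⟩ :
                  ↥(J.restrictScalars (MonoidAlgebra ℤ H))) ⊗ₜ[MonoidAlgebra ℤ H] y) :=
              map_zsmul (((TensorProduct.mk (MonoidAlgebra ℤ H) _ _).flip y).toAddMonoidHom)
                c (⟨a, hle a ha⟩ : ↥(J.restrictScalars (MonoidAlgebra ℤ H)))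
            rw [h1, h2]
            exact Submodule.smul_mem _ _ (ih (hle a ha) y)
        have h7 := main (j : MonoidAlgebra ℤ P') hjspan j.2 y
        simpa using h7
    exact hz
  constructor
  · -- injectivity
    intro z z' hzz
    obtain ⟨l, rfl⟩ := surjβ z
    obtain ⟨l', rfl⟩ := surjβ z'
    have h1 : MonoidAlgebra.ofCoeff (Finsupp.mapDomain fbar l) = MonoidAlgebra.ofCoeff (Finsupp.mapDomain fbar l') := by
      rw [← hFβl, ← hFβl]
      exact hzz
    rw [Finsupp.mapDomain_injective hfbar_inj (MonoidAlgebra.ofCoeff_injective h1)]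
  · -- range
    have hItil : ∀ k ∈ {k : K | ∃ x ∈ I, ∃ g : G, k = ι x * ρ g}, ∀ k' : K,
        k' * k ∈ {k : K | ∃ x ∈ I, ∃ g : G, k = ι x * ρ g} := by
      rintro k ⟨x, hx, g, rfl⟩ k'
      obtain ⟨p, g', rfl⟩ := surjK k'
      exact ⟨p * x, hI x hx p, g' * g, by rw [map_mul, map_mul, mul_mul_mul_comm]⟩
    have hIdeq : Ideal.span ((MonoidAlgebra.of ℤ K) '' (⇑ι '' I)) =
        Ideal.span ((MonoidAlgebra.of ℤ K) '' {k : K | ∃ x ∈ I, ∃ g : G, k = ι x * ρ g}) := by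
      apply le_antisymm
      · apply Ideal.span_le.mpr
        rintro _ ⟨_, ⟨x, hx, rfl⟩, rfl⟩
        exact Ideal.subset_span ⟨ι x, ⟨x, hx, 1, by simp⟩, rfl⟩
      · apply Ideal.span_le.mpr
        rintro _ ⟨k, ⟨x, hx, g, rfl⟩, rfl⟩
        rw [map_mul]
        exact Ideal.mul_mem_right _ _ (Ideal.subset_span ⟨ι x, ⟨x, hx, rfl⟩, rfl⟩)
    have hmapdom : ∀ l : Q →₀ ℤ, MonoidAlgebra.ofCoeff (Finsupp.mapDomain fbar l) ∈
        Submodule.span ℤ ((MonoidAlgebra.of ℤ K) ''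
          {k : K | ∃ x ∈ I, ∃ g : G, k = ι x * ρ g}) := by
      intro l
      induction l using Finsupp.induction with
      | zero => simp
      | single_add q c f hqf hc ih =>
        rw [Finsupp.mapDomain_add, MonoidAlgebra.ofCoeff_add, Finsupp.mapDomain_single, MonoidAlgebra.ofCoeff_single]
        refine add_mem ?_ ih
        rw [fsingle_eq_smul_of]
        refine Submodule.smul_mem _ _ (Submodule.subset_span ⟨fbar q, ?_, rfl⟩)
        induction q using Quotient.inductionOn with | _ a =>
        exact ⟨a.1.1, a.1.2, a.2, rfl⟩
    rw [hIdeq, ideal_span_eq_zspan _ hItil]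
    apply Set.Subset.antisymm
    · rintro _ ⟨z, rfl⟩
      obtain ⟨l, rfl⟩ := surjβ z
      show Fl (β l) ∈ (Submodule.span ℤ ((MonoidAlgebra.of ℤ K) ''
        {k : K | ∃ x ∈ I, ∃ g : G, k = ι x * ρ g}) :
          Submodule ℤ (MonoidAlgebra ℤ K))
      rw [hFβl]
      exact hmapdom l
    · intro y hy
      have hsp : Submodule.span ℤ ((MonoidAlgebra.of ℤ K) ''
          {k : K | ∃ x ∈ I, ∃ g : G, k = ι x * ρ g}) ≤ LinearMap.range Fl := by
        apply Submodule.span_le.mpr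
        rintro _ ⟨k, ⟨x, hx, g, rfl⟩, rfl⟩
        exact ⟨_, hofx x hx g⟩
      obtain ⟨z, hz⟩ := hsp hy
      exact ⟨z, hz⟩
end

section
/- Let P be a fine and sharp monoid with P^gp torsion-free. Then there exist an integer r ≥ 0, a fine saturated submonoid Q ⊂ ℕ^r with (1,1,…,1) ∈ Q and Q = ℕ^r ∩ Q^gp (intersection inside ℤ^r), an integer N > 0, and monoid morphisms f: P → Q, g: Q → P such that g(f(x)) = x^N for all x ∈ P. -/
namespace Stmt13


variable {ι : Type*} [Fintype ι] [DecidableEq ι]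

/-- Pairing of a functional (given as a vector) with a vector. -/
def dot (φ y : ι → ℚ) : ℚ := ∑ b, φ b * y b

lemma dot_add_right (φ y z : ι → ℚ) : dot φ (y + z) = dot φ y + dot φ z := by
  simp [dot, mul_add, Finset.sum_add_distrib]

lemma dot_smul_right (φ y : ι → ℚ) (c : ℚ) : dot φ (c • y) = c * dot φ y := by
  simp only [dot, Pi.smul_apply, smul_eq_mul, Finset.mul_sum]
  exact Finset.sum_congr rfl fun i _ => by ring

lemma dot_zero_right (φ : ι → ℚ) : dot φ 0 = 0 := by simp [dot]

lemma dot_zero_left (y : ι → ℚ) : dot 0 y = 0 := by simp [dot]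

lemma dot_sub_right (φ y z : ι → ℚ) : dot φ (y - z) = dot φ y - dot φ z := by
  simp [dot, mul_sub, Finset.sum_sub_distrib]

lemma dot_smul_left (φ y : ι → ℚ) (c : ℚ) : dot (c • φ) y = c * dot φ y := by
  simp only [dot, Pi.smul_apply, smul_eq_mul, Finset.mul_sum]
  exact Finset.sum_congr rfl fun i _ => by ring

lemma dot_sub_left (φ ψ y : ι → ℚ) : dot (φ - ψ) y = dot φ y - dot ψ y := by
  simp [dot, sub_mul, Finset.sum_sub_distrib]

lemma dot_single (b : ι) (y : ι → ℚ) : dot (Pi.single b 1) y = y b := by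
  simp [dot, Pi.single_apply]

/-- Membership in the cone (over `ℚ≥0`) generated by a list of vectors. -/
def inCone : List (ι → ℚ) → (ι → ℚ) → Prop
  | [], y => y = 0
  | p :: l, y => ∃ t : ℚ, 0 ≤ t ∧ ∃ z, inCone l z ∧ y = t • p + z

lemma inCone_zero (l : List (ι → ℚ)) : inCone l 0 := by
  induction l with
  | nil => rfl
  | cons p l ih => exact ⟨0, le_rfl, 0, ih, by simp⟩

lemma inCone_add {l : List (ι → ℚ)} {y z : ι → ℚ} (hy : inCone l y) (hz : inCone l z) :
    inCone l (y + z) := by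
  induction l generalizing y z with
  | nil => simp only [inCone] at *; simp [hy, hz]
  | cons p l ih =>
    obtain ⟨t1, ht1, w1, hw1, rfl⟩ := hy
    obtain ⟨t2, ht2, w2, hw2, rfl⟩ := hz
    exact ⟨t1 + t2, by positivity, w1 + w2, ih hw1 hw2, by rw [add_smul]; abel⟩

lemma inCone_smul {l : List (ι → ℚ)} {y : ι → ℚ} {c : ℚ} (hc : 0 ≤ c) (hy : inCone l y) :
    inCone l (c • y) := by
  induction l generalizing y with
  | nil => simp only [inCone] at *; simp [hy]
  | cons p l ih =>
    obtain ⟨t, ht, w, hw, rfl⟩ := hy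
    exact ⟨c * t, mul_nonneg hc ht, c • w, ih hw, by rw [smul_add, smul_smul]⟩

lemma inCone_mem {l : List (ι → ℚ)} {p : ι → ℚ} (hp : p ∈ l) : inCone l p := by
  induction l with
  | nil => simp at hp
  | cons q l ih =>
    rcases List.mem_cons.1 hp with h | h
    · exact ⟨1, zero_le_one, 0, inCone_zero l, by simp [h]⟩
    · exact ⟨0, le_rfl, p, ih h, by simp⟩

section foldmax

lemma foldr_max_nonneg (L : List ℚ) : 0 ≤ L.foldr max 0 := by
  induction L with
  | nil => simp
  | cons x L ih => exact le_trans ih (by simp [List.foldr])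

lemma le_foldr_max {L : List ℚ} {x : ℚ} (hx : x ∈ L) : x ≤ L.foldr max 0 := by
  induction L with
  | nil => simp at hx
  | cons a L ih =>
    rcases List.mem_cons.1 hx with h | h
    · simp [h, List.foldr]
    · exact le_trans (ih h) (by simp [List.foldr])

lemma foldr_max_le {L : List ℚ} {U : ℚ} (hU : 0 ≤ U) (h : ∀ x ∈ L, x ≤ U) :
    L.foldr max 0 ≤ U := by
  induction L with
  | nil => simpa
  | cons a L ih =>
    simp only [List.foldr, max_le_iff]
    exact ⟨h a (by simp), ih fun x hx => h x (List.mem_cons_of_mem _ hx)⟩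

end foldmax

lemma ratden (q : ℚ) : (q.den : ℚ) * q = (q.num : ℚ) := by
  rw [mul_comm]; exact_mod_cast Rat.mul_den_eq_num q

lemma dot_single_right (φ : ι → ℚ) (b : ι) : dot φ (Pi.single b 1) = φ b := by
  simp [dot, Pi.single_apply]

/-- **Weyl's theorem** over `ℚ`: a finitely generated cone is the intersection of finitely
many half-spaces. -/
theorem weyl (l : List (ι → ℚ)) :
    ∃ lf : List (ι → ℚ), ∀ y, inCone l y ↔ ∀ φ ∈ lf, 0 ≤ dot φ y := by
  induction l with
  | nil =>
    refine ⟨(Finset.univ.toList.map fun b : ι => Pi.single b 1) ++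
      Finset.univ.toList.map fun b : ι => -Pi.single b 1, fun y => ?_⟩
    constructor
    · rintro rfl φ _; simp [dot]
    · intro h
      funext b
      have h1 : 0 ≤ dot (Pi.single b 1) y :=
        h _ (List.mem_append_left _ (List.mem_map.2 ⟨b, Finset.mem_toList.2 (Finset.mem_univ b), rfl⟩))
      have h2 : 0 ≤ dot (-Pi.single b 1) y :=
        h _ (List.mem_append_right _ (List.mem_map.2 ⟨b, Finset.mem_toList.2 (Finset.mem_univ b), rfl⟩))
      have h2' : dot (-Pi.single b 1) y = -dot (Pi.single b 1) y := by
        simp [dot, Finset.sum_neg_distrib]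
      rw [dot_single] at h1
      rw [h2', dot_single] at h2
      have : y b = 0 := le_antisymm (by linarith) h1
      simpa using this
  | cons p l ih =>
    obtain ⟨lf, hlf⟩ := ih
    classical
    refine ⟨lf.filter (fun φ => decide (0 ≤ dot φ p)) ++
      lf.flatMap (fun φ => lf.map fun ψ =>
        if 0 < dot φ p ∧ dot ψ p < 0 then (dot φ p) • ψ - (dot ψ p) • φ else 0), fun y => ?_⟩
    constructor
    · rintro ⟨t, ht, z, hz, rfl⟩ χ hχ
      have hz' := (hlf z).1 hz
      rcases List.mem_append.1 hχ with h | h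
      · rw [List.mem_filter] at h
        have hχp : 0 ≤ dot χ p := by simpa using h.2
        rw [dot_add_right, dot_smul_right]
        have := hz' χ h.1
        positivity
      · simp only [List.mem_flatMap, List.mem_map] at h
        obtain ⟨φ, hφ, ψ, hψ, rfl⟩ := h
        by_cases hc : 0 < dot φ p ∧ dot ψ p < 0
        · rw [if_pos hc]
          have e1 : dot ((dot φ p) • ψ - (dot ψ p) • φ) (t • p + z)
              = t * ((dot φ p) * (dot ψ p) - (dot ψ p) * (dot φ p))
                + ((dot φ p) * dot ψ z - (dot ψ p) * dot φ z) := by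
            rw [dot_add_right, dot_sub_left, dot_sub_left, dot_smul_left, dot_smul_left,
              dot_smul_left, dot_smul_left, dot_smul_right, dot_smul_right]
            ring
          rw [e1]
          have h1 := hz' φ hφ
          have h2 := hz' ψ hψ
          nlinarith [hc.1, hc.2]
        · rw [if_neg hc, dot_zero_left]
    · intro hy
      set L := (lf.filter (fun ψ => decide (dot ψ p < 0))).map (fun ψ => dot ψ y / dot ψ p)
        with hL
      set t := L.foldr max 0 with htdef
      have ht0 : 0 ≤ t := foldr_max_nonneg L
      refine ⟨t, ht0, y - t • p, ?_, by abel⟩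
      rw [hlf]
      intro φ hφ
      rw [dot_sub_right, dot_smul_right, sub_nonneg]
      rcases lt_trichotomy (dot φ p) 0 with hc | hc | hc
      · -- lower bound case: t ≥ dot φ y / dot φ p
        have hmem : dot φ y / dot φ p ∈ L := by
          rw [hL]
          exact List.mem_map.2 ⟨φ, List.mem_filter.2 ⟨hφ, by simpa using hc⟩, rfl⟩
        have hle : dot φ y / dot φ p ≤ t := le_foldr_max hmem
        have := mul_le_mul_of_nonpos_right hle (le_of_lt hc)
        rw [div_mul_cancel₀ _ (ne_of_lt hc)] at this
        linarith [this]
      · rw [hc, mul_zero]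
        exact hy φ (List.mem_append_left _
          (List.mem_filter.2 ⟨hφ, by simp [hc]⟩))
      · -- upper bound case
        have hφy : 0 ≤ dot φ y :=
          hy φ (List.mem_append_left _ (List.mem_filter.2 ⟨hφ, by simpa using le_of_lt hc⟩))
        have hU : 0 ≤ dot φ y / dot φ p := by positivity
        have hbound : ∀ x ∈ L, x ≤ dot φ y / dot φ p := by
          intro x hx
          rw [hL] at hx
          obtain ⟨ψ, hψmem, rfl⟩ := List.mem_map.1 hx
          rw [List.mem_filter] at hψmem
          have hd : dot ψ p < 0 := by simpa using hψmem.2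
          have hχ : 0 ≤ dot ((dot φ p) • ψ - (dot ψ p) • φ) y := by
            apply hy
            refine List.mem_append_right _ (List.mem_flatMap.2 ⟨φ, hφ, List.mem_map.2
              ⟨ψ, hψmem.1, ?_⟩⟩)
            rw [if_pos ⟨hc, hd⟩]
          rw [dot_sub_left, dot_smul_left, dot_smul_left, sub_nonneg] at hχ
          rw [div_le_iff_of_neg hd, div_mul_eq_mul_div, div_le_iff₀ hc]
          nlinarith
        have : t ≤ dot φ y / dot φ p := foldr_max_le hU hbound
        calc t * dot φ p ≤ (dot φ y / dot φ p) * dot φ p :=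
              mul_le_mul_of_nonneg_right this (le_of_lt hc)
          _ = dot φ y := div_mul_cancel₀ _ (ne_of_gt hc)



/-- Gordan-type finite generation via Dickson's lemma: a submonoid of `ℕ^r` that is closed
under differences (computed in `ℕ^r`) is finitely generated. -/
lemma fg_of_diff_closed {r : ℕ} (Qs : AddSubmonoid (Fin r → ℕ))
    (hd : ∀ x a b : Fin r → ℕ, a ∈ Qs → b ∈ Qs → x + b = a → x ∈ Qs) : Qs.FG := by
  classical
  set Min : Set (Fin r → ℕ) :=
    {v | v ∈ Qs ∧ v ≠ 0 ∧ ∀ w, w ∈ Qs → w ≤ v → w = 0 ∨ w = v} with hMin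
  have hanti : IsAntichain (· ≤ ·) Min := by
    intro u hu v hv huv (hle : u ≤ v)
    rcases hv.2.2 u hu.1 hle with h | h
    · exact hu.2.1 h
    · exact huv h
  have hpwo : Min.IsPWO := Set.isPWO_of_wellQuasiOrderedLE Min
  have hfin : Min.Finite := hanti.finite_of_partiallyWellOrderedOn hpwo
  have hgen : ∀ v ∈ Qs, v ∈ AddSubmonoid.closure Min := by
    intro v hv
    generalize hn : (∑ i, v i) = n
    induction n using Nat.strong_induction_on generalizing v with
    | _ n ih =>
      by_cases h0 : v = 0
      · rw [h0]; exact AddSubmonoid.zero_mem _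
      by_cases hmin : v ∈ Min
      · exact AddSubmonoid.subset_closure hmin
      · have : ∃ w, w ∈ Qs ∧ w ≤ v ∧ w ≠ 0 ∧ w ≠ v := by
          by_contra hcon
          push_neg at hcon
          exact hmin ⟨hv, h0, fun w hw hle => by
            by_cases hw0 : w = 0
            · exact Or.inl hw0
            · exact Or.inr (hcon w hw hle hw0)⟩
        obtain ⟨w, hwQ, hwle, hw0, hwv⟩ := this
        have hsub : (v - w) + w = v := by
          funext i; simp [Nat.sub_add_cancel (hwle i)]
        have hvwQ : v - w ∈ Qs := hd (v - w) v w hv hwQ hsub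
        have hsumw : 0 < ∑ i, w i := by
          rcases Function.ne_iff.1 hw0 with ⟨i, hi⟩
          exact Finset.sum_pos' (fun _ _ => Nat.zero_le _)
            ⟨i, Finset.mem_univ i, Nat.pos_of_ne_zero hi⟩
        have hvw0 : v - w ≠ 0 := by
          intro h
          exact hwv (by rw [← hsub, h, zero_add])
        have hsumvw : 0 < ∑ i, (v - w) i := by
          rcases Function.ne_iff.1 hvw0 with ⟨i, hi⟩
          exact Finset.sum_pos' (fun _ _ => Nat.zero_le _)
            ⟨i, Finset.mem_univ i, Nat.pos_of_ne_zero hi⟩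
        have hsplit : (∑ i, (v - w) i) + (∑ i, w i) = n := by
          rw [← hn, ← Finset.sum_add_distrib]
          exact Finset.sum_congr rfl fun i _ => by
            have := congrFun hsub i
            simpa using this
        have h1 : v - w ∈ AddSubmonoid.closure Min :=
          ih (∑ i, (v - w) i) (by omega) (v - w) hvwQ rfl
        have h2 : w ∈ AddSubmonoid.closure Min :=
          ih (∑ i, w i) (by omega) w hwQ rfl
        rw [← hsub]
        exact AddSubmonoid.add_mem _ h1 h2
  refine ⟨hfin.toFinset, le_antisymm ?_ ?_⟩
  · rw [AddSubmonoid.closure_le]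
    intro v hv
    rw [Set.Finite.coe_toFinset] at hv
    exact hv.1
  · intro v hv
    have := hgen v hv
    rwa [Set.Finite.coe_toFinset]



set_option maxHeartbeats 2000000 in
theorem main {P : Type*} [CancelCommMonoid P] (hfg : Monoid.FG P)
    (hsharp : ∀ x : P, IsUnit x → x = 1)
    (htf : ∀ a b : P, ∀ n : ℕ, 0 < n → a ^ n = b ^ n → a = b) :
    ∃ (r : ℕ) (Q : Submonoid (Multiplicative (Fin r → ℕ))),
      Monoid.FG ↥Q ∧
      Multiplicative.ofAdd (fun _ => (1 : ℕ)) ∈ Q ∧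
      (∀ x : Multiplicative (Fin r → ℕ), (∃ a ∈ Q, ∃ b ∈ Q, x * b = a) → x ∈ Q) ∧
      ∃ (N : ℕ) (f : P →* ↥Q) (g : ↥Q →* P), 0 < N ∧ ∀ x : P, g (f x) = x ^ N := by
  classical
  obtain ⟨S, hS⟩ := hfg.fg_top
  set s := S.card with hs
  set p : Fin s → P := fun i => ((S.equivFin.symm i) : P) with hp
  have hrange : Set.range p = ↑S := by
    ext x
    constructor
    · rintro ⟨i, rfl⟩; exact (S.equivFin.symm i).2
    · intro hx; exact ⟨S.equivFin ⟨x, hx⟩, by simp [hp]⟩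
  set π : (Fin s → ℕ) → P := fun a => ∏ i, p i ^ a i with hπ
  have π_add : ∀ a b, π (a + b) = π a * π b := by
    intro a b
    simp only [hπ, Pi.add_apply, pow_add]
    rw [Finset.prod_mul_distrib]
  have π_zero : π 0 = 1 := by simp [hπ]
  have π_single : ∀ i, π (Pi.single i 1) = p i := by
    intro i
    have h0 : π (Pi.single i 1) = ∏ j, p j ^ (Pi.single i 1 : Fin s → ℕ) j := rfl
    rw [h0, Finset.prod_eq_single i]
    · simp
    · intro j _ hj; rw [Pi.single_eq_of_ne hj, pow_zero]
    · simp
  have π_nsmul : ∀ (m : ℕ) a, π (m • a) = π a ^ m := by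
    intro m a
    induction m with
    | zero => simpa using π_zero
    | succ m ih => rw [succ_nsmul, π_add, ih, pow_succ]
  have π_surj : ∀ x : P, ∃ a, π a = x := by
    intro x
    have hx : x ∈ Submonoid.closure (↑S : Set P) := hS ▸ Submonoid.mem_top x
    induction hx using Submonoid.closure_induction with
    | mem y hy =>
      rw [← hrange] at hy
      obtain ⟨i, rfl⟩ := hy
      exact ⟨Pi.single i 1, π_single i⟩
    | one => exact ⟨0, π_zero⟩
    | mul y z _ _ hy hz =>
      obtain ⟨a, ha⟩ := hy
      obtain ⟨b, hb⟩ := hz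
      exact ⟨a + b, by rw [π_add, ha, hb]⟩
  -- the integer lattice and relations subgroup
  set ic : (Fin s → ℕ) → (Fin s → ℤ) := fun a i => (a i : ℤ) with hic
  have ic_add : ∀ a b, ic (a + b) = ic a + ic b := by
    intro a b; funext i; simp [hic]
  set K : AddSubgroup (Fin s → ℤ) :=
    { carrier := {x | ∃ a b, x = ic a - ic b ∧ π a = π b}
      zero_mem' := ⟨0, 0, by simp, rfl⟩
      add_mem' := by
        rintro x y ⟨a, b, rfl, hab⟩ ⟨c, d, rfl, hcd⟩
        refine ⟨a + c, b + d, ?_, by rw [π_add, π_add, hab, hcd]⟩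
        rw [ic_add, ic_add]; abel
      neg_mem' := by
        rintro x ⟨a, b, rfl, hab⟩
        exact ⟨b, a, by abel, hab.symm⟩ } with hK
  have memK : ∀ x, x ∈ K ↔ ∃ a b, x = ic a - ic b ∧ π a = π b := fun x => Iff.rfl
  -- key: division property
  have hKnat : ∀ (m : ℕ) (v : Fin s → ℤ), 0 < m → (m : ℤ) • v ∈ K → v ∈ K := by
    intro m v hm hv
    set a : Fin s → ℕ := fun i => (v i).toNat with ha
    set b : Fin s → ℕ := fun i => (-(v i)).toNat with hb
    have hab : v = ic a - ic b := by
      funext i; simp only [ha, hb, hic, Pi.sub_apply]; omega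
    obtain ⟨c, d, heq, hcd⟩ := hv
    have hnat : m • a + d = m • b + c := by
      funext i
      have hi := congrFun heq i
      simp only [hic, Pi.smul_apply, Pi.sub_apply, smul_eq_mul] at hi
      have hvi : v i = (a i : ℤ) - (b i : ℤ) := by simp only [ha, hb]; omega
      have hz : (m : ℤ) * (a i) + d i = (m : ℤ) * (b i) + c i := by
        linear_combination hi - (m : ℤ) * hvi
      simp only [Pi.add_apply, Pi.smul_apply, smul_eq_mul]
      exact_mod_cast hz
    have hπeq : π a ^ m * π d = π b ^ m * π c := by
      rw [← π_nsmul, ← π_nsmul, ← π_add, ← π_add, hnat]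
    rw [hcd] at hπeq
    have : π a ^ m = π b ^ m := mul_right_cancel hπeq
    exact ⟨a, b, hab, htf _ _ m hm this⟩
  set K' : Submodule ℤ (Fin s → ℤ) := AddSubgroup.toIntSubmodule K with hK'
  set A := (Fin s → ℤ) ⧸ K' with hA
  haveI : NoZeroSMulDivisors ℤ A := by
    refine ⟨fun {n x} hnx => ?_⟩
    by_cases hn : n = 0
    · exact Or.inl hn
    right
    obtain ⟨v, rfl⟩ := Submodule.Quotient.mk_surjective K' x
    rw [← Submodule.Quotient.mk_smul, Submodule.Quotient.mk_eq_zero] at hnx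
    rw [Submodule.Quotient.mk_eq_zero]
    rcases lt_or_gt_of_ne hn with h | h
    · have : ((-n).toNat : ℤ) • v ∈ K' := by
        have := neg_mem hnx
        rw [← neg_smul] at this
        have he : ((-n).toNat : ℤ) = -n := Int.toNat_of_nonneg (by omega)
        rwa [he]
      exact hKnat (-n).toNat v (by omega) this
    · have he : ((n).toNat : ℤ) = n := Int.toNat_of_nonneg (by omega)
      exact hKnat n.toNat v (by omega) (by rwa [he])
  haveI : Module.Free ℤ A := Module.free_of_finite_type_torsion_free'
  set ι := Module.Free.ChooseBasisIndex ℤ A with hι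
  set B : Module.Basis ι ℤ A := Module.Free.chooseBasis ℤ A with hB
  set E : A ≃ₗ[ℤ] (ι → ℤ) := B.equivFun with hE
  set mk : (Fin s → ℤ) → A := fun v => Submodule.Quotient.mk v with hmk
  -- the embedding
  set emb : P → (ι → ℤ) := fun x => E (mk (ic (Classical.choose (π_surj x)))) with hemb
  have emb_eq : ∀ (x : P) (a : Fin s → ℕ), π a = x → emb x = E (mk (ic a)) := by
    intro x a hax
    have h1 : π (Classical.choose (π_surj x)) = x := Classical.choose_spec (π_surj x)
    have : mk (ic (Classical.choose (π_surj x))) = mk (ic a) := by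
      rw [hmk, Submodule.Quotient.eq]
      exact ⟨Classical.choose (π_surj x), a, rfl, by rw [h1, hax]⟩
    show E (mk (ic (Classical.choose (π_surj x)))) = E (mk (ic a))
    rw [this]
  have emb_mul : ∀ x y : P, emb (x * y) = emb x + emb y := by
    intro x y
    have hx := Classical.choose_spec (π_surj x)
    have hy := Classical.choose_spec (π_surj y)
    have : π (Classical.choose (π_surj x) + Classical.choose (π_surj y)) = x * y := by
      rw [π_add, hx, hy]
    rw [emb_eq (x * y) _ this, ic_add]
    show E (mk (ic (Classical.choose (π_surj x)) + ic (Classical.choose (π_surj y))))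
      = E (mk (ic (Classical.choose (π_surj x)))) + E (mk (ic (Classical.choose (π_surj y))))
    have hmk2 : mk (ic (Classical.choose (π_surj x)) + ic (Classical.choose (π_surj y)))
        = mk (ic (Classical.choose (π_surj x))) + mk (ic (Classical.choose (π_surj y))) := rfl
    rw [hmk2, map_add]
  have emb_one : emb 1 = 0 := by
    rw [emb_eq 1 0 π_zero]
    have : ic 0 = 0 := by funext i; simp [hic]
    rw [this]
    simp [hmk]
  have emb_pow : ∀ (x : P) (n : ℕ), emb (x ^ n) = (n : ℤ) • emb x := by
    intro x n
    induction n with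
    | zero => simpa using emb_one
    | succ n ih =>
      rw [pow_succ, emb_mul, ih]
      push_cast
      rw [add_smul, one_smul]
  have emb_inj : ∀ x y : P, emb x = emb y → x = y := by
    intro x y h
    have hx := Classical.choose_spec (π_surj x)
    have hy := Classical.choose_spec (π_surj y)
    have h' : E (mk (ic (Classical.choose (π_surj x)))) = E (mk (ic (Classical.choose (π_surj y)))) := h
    have h2 := E.injective h'
    rw [hmk, Submodule.Quotient.eq] at h2
    obtain ⟨c, d, heq, hcd⟩ := h2
    have hnat : Classical.choose (π_surj x) + d = Classical.choose (π_surj y) + c := by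
      funext i
      have hi := congrFun heq i
      simp only [hic, Pi.sub_apply, Pi.add_apply] at hi ⊢
      omega
    have := congrArg π hnat
    rw [π_add, π_add, hx, hy, hcd] at this
    exact mul_right_cancel this
  -- generators in the lattice
  haveI : DecidableEq ι := Classical.decEq ι
  set q : Fin s → (ι → ℤ) := fun j => emb (p j) with hq
  have emb_π_sum : ∀ a : Fin s → ℕ, emb (π a) = ∑ j, (a j : ℤ) • q j := by
    intro a
    have h1 : ic a = ∑ j, (a j : ℤ) • ic (Pi.single j 1) := by
      funext i
      simp only [Finset.sum_apply, Pi.smul_apply, smul_eq_mul, hic]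
      rw [Finset.sum_eq_single i]
      · simp
      · intro j _ hj
        rw [Pi.single_eq_of_ne (Ne.symm hj)]
        simp
      · simp
    rw [emb_eq (π a) a rfl, h1]
    have h2 : mk (∑ j, (a j : ℤ) • ic (Pi.single j 1)) = ∑ j, (a j : ℤ) • mk (ic (Pi.single j 1)) := by
      have hmkQ : ∀ w : Fin s → ℤ, mk w = K'.mkQ w := fun _ => rfl
      simp only [hmkQ, map_sum, map_smul]
    rw [h2, map_sum]
    refine Finset.sum_congr rfl fun j _ => ?_
    rw [map_smul]
    congr 1
    rw [← emb_eq (p j) (Pi.single j 1) (π_single j), hq]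
  have hspan : ∀ z : ι → ℤ, ∃ x y : P, z = emb x - emb y := by
    intro z
    obtain ⟨wA, hw⟩ := E.surjective z
    obtain ⟨v, hv⟩ := Submodule.Quotient.mk_surjective K' wA
    set a : Fin s → ℕ := fun i => (v i).toNat with ha2
    set b : Fin s → ℕ := fun i => (-(v i)).toNat with hb2
    have hab : v = ic a - ic b := by
      funext i; simp only [ha2, hb2, hic, Pi.sub_apply]; omega
    refine ⟨π a, π b, ?_⟩
    rw [emb_eq (π a) a rfl, emb_eq (π b) b rfl, ← map_sub]
    have h3 : mk (ic a) - mk (ic b) = mk (ic a - ic b) := rfl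
    rw [h3, ← hab]
    have h4 : mk v = wA := hv
    rw [h4, hw]
  -- rationalization
  set cQ : (ι → ℤ) → (ι → ℚ) := fun z i => (z i : ℚ) with hcQ
  have cQ_add : ∀ y z, cQ (y + z) = cQ y + cQ z := by intro y z; funext i; simp [hcQ]
  have cQ_sub : ∀ y z, cQ (y - z) = cQ y - cQ z := by intro y z; funext i; simp [hcQ]
  have cQ_zero : cQ 0 = 0 := by funext i; simp [hcQ]
  have cQ_zsmul : ∀ (a : ℤ) z, cQ (a • z) = (a : ℚ) • cQ z := by
    intro a z; funext i; simp [hcQ]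
  have cQ_inj : ∀ y z, cQ y = cQ z → y = z := by
    intro y z h
    funext i
    have := congrFun h i
    simp only [hcQ] at this
    exact_mod_cast this
  set genList : List (ι → ℚ) := List.ofFn (fun j : Fin s => cQ (q j)) with hgen
  have hmem_gen : ∀ j, cQ (q j) ∈ genList := by
    intro j
    rw [hgen, List.mem_ofFn]
    exact ⟨j, rfl⟩
  have hconeP : ∀ x : P, inCone genList (cQ (emb x)) := by
    intro x
    obtain ⟨a, rfl⟩ := π_surj x
    rw [emb_π_sum]
    have h1 : cQ (∑ j, (a j : ℤ) • q j) = ∑ j, (a j : ℚ) • cQ (q j) := by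
      funext i
      simp [hcQ, Finset.sum_apply]
    rw [h1]
    refine Finset.sum_induction _ _ (fun _ _ => inCone_add) (inCone_zero _) fun j _ => ?_
    exact inCone_smul (by positivity) (inCone_mem (hmem_gen j))
  have hclear : ∀ (l : List (ι → ℚ)), (∀ w ∈ l, ∃ xp : P, w = cQ (emb xp)) →
      ∀ y, inCone l y → ∃ m : ℕ, 0 < m ∧ ∃ x : P, (m : ℚ) • y = cQ (emb x) := by
    intro l
    induction l with
    | nil =>
      rintro _ y rfl
      exact ⟨1, one_pos, 1, by rw [emb_one, cQ_zero, smul_zero]⟩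
    | cons w l ih =>
      rintro hmem y ⟨t, ht, z, hz, rfl⟩
      obtain ⟨m', hm', x', hx'⟩ := ih (fun w hw => hmem w (List.mem_cons_of_mem _ hw)) z hz
      obtain ⟨xp, hxp⟩ := hmem w List.mem_cons_self
      set m := m' * t.den with hm
      have hmpos : 0 < m := Nat.mul_pos hm' t.pos
      set k : ℕ := m' * t.num.toNat with hk
      refine ⟨m, hmpos, xp ^ k * x' ^ t.den, ?_⟩
      rw [emb_mul, cQ_add]
      have hden : (t.den : ℚ) * t = (t.num : ℚ) := by
        rw [mul_comm]; exact_mod_cast Rat.mul_den_eq_num t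
      have hnum : (t.num.toNat : ℚ) = (t.num : ℚ) := by
        have := Rat.num_nonneg.2 ht
        exact_mod_cast Int.toNat_of_nonneg this
      have e1 : (m : ℚ) • (t • w + z) = (k : ℚ) • w + (t.den : ℚ) • ((m' : ℚ) • z) := by
        match_scalars
        · push_cast [hk, hm]
          rw [hnum, ← hden]
          ring
        · push_cast [hm]; ring
      rw [e1, hx', hxp]
      have e2 : (k : ℚ) • cQ (emb xp) = cQ (emb (xp ^ k)) := by
        rw [emb_pow, cQ_zsmul]; push_cast; rfl
      have e3 : (t.den : ℚ) • cQ (emb x') = cQ (emb (x' ^ t.den)) := by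
        rw [emb_pow, cQ_zsmul]; push_cast; rfl
      rw [e2, e3]
  have hpm : ∀ z : ι → ℤ, inCone genList (cQ z) → inCone genList (cQ (-z)) → z = 0 := by
    intro z h1 h2
    obtain ⟨m, hm, x, hx⟩ := hclear genList (fun w hw => by
      rw [hgen, List.mem_ofFn] at hw; obtain ⟨j, rfl⟩ := hw; exact ⟨p j, rfl⟩) _ h1
    obtain ⟨m', hm', y, hy⟩ := hclear genList (fun w hw => by
      rw [hgen, List.mem_ofFn] at hw; obtain ⟨j, rfl⟩ := hw; exact ⟨p j, rfl⟩) _ h2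
    have hx2 : (m : ℤ) • z = emb x := by
      apply cQ_inj
      rw [cQ_zsmul, ← hx]; push_cast; rfl
    have hy2 : (m' : ℤ) • (-z) = emb y := by
      apply cQ_inj
      rw [cQ_zsmul, ← hy]; push_cast; rfl
    have hxy : emb (x ^ m' * y ^ m) = 0 := by
      rw [emb_mul, emb_pow, emb_pow, ← hx2, ← hy2, smul_smul, smul_smul]
      rw [smul_neg]
      rw [mul_comm (m' : ℤ) (m : ℤ)]
      abel
    have hxy1 : x ^ m' * y ^ m = 1 := emb_inj _ _ (by rw [hxy, emb_one])
    have hxunit : IsUnit (x ^ m') := IsUnit.of_mul_eq_one _ hxy1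
    have hx1 : x ^ m' = 1 := hsharp _ hxunit
    have : ((m' : ℤ) * (m : ℤ)) • z = 0 := by
      rw [mul_smul, hx2, ← emb_pow, hx1, emb_one]
    funext i
    have hi := congrFun this i
    simp only [Pi.smul_apply, smul_eq_mul, Pi.zero_apply] at hi
    have hmm : (m' : ℤ) * (m : ℤ) ≠ 0 := by positivity
    exact (mul_eq_zero.1 hi).resolve_left hmm
  -- interior point
  set onevec : Fin s → ℕ := fun _ => 1 with honevec
  set u : ι → ℤ := emb (π onevec) with hu
  have hu_sum : u = ∑ j, q j := by
    rw [hu, emb_π_sum]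
    exact Finset.sum_congr rfl fun j _ => by rw [honevec]; simp
  have hu_cone : inCone genList (cQ u) := hconeP _
  obtain ⟨lf, hlf⟩ := weyl genList
  have cQ_sum : ∀ (T : Finset (Fin s)) (f : Fin s → ι → ℤ),
      cQ (∑ j ∈ T, f j) = ∑ j ∈ T, cQ (f j) := by
    intro T f; funext i; simp [hcQ, Finset.sum_apply]
  have dot_sum_right : ∀ (φ : ι → ℚ) (T : Finset (Fin s)) (f : Fin s → ι → ℚ),
      dot φ (∑ j ∈ T, f j) = ∑ j ∈ T, dot φ (f j) := by
    intro φ T f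
    simp only [dot, Finset.sum_apply, Finset.mul_sum]
    rw [Finset.sum_comm]
  have hzero : ∀ φ ∈ lf, dot φ (cQ u) = 0 → φ = 0 := by
    intro φ hφ hdot
    have hjz : ∀ j, dot φ (cQ (q j)) = 0 := by
      have hsum : ∑ j, dot φ (cQ (q j)) = 0 := by
        rw [← dot_sum_right, ← cQ_sum, ← hu_sum, hdot]
      have hnn : ∀ j ∈ Finset.univ, 0 ≤ dot φ (cQ (q j)) :=
        fun j _ => (hlf (cQ (q j))).1 (inCone_mem (hmem_gen j)) φ hφ
      intro j
      exact (Finset.sum_eq_zero_iff_of_nonneg hnn).1 hsum j (Finset.mem_univ j)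
    have hdotP : ∀ x : P, dot φ (cQ (emb x)) = 0 := by
      intro x
      obtain ⟨a, rfl⟩ := π_surj x
      rw [emb_π_sum]
      have h1 : cQ (∑ j, (a j : ℤ) • q j) = ∑ j, (a j : ℚ) • cQ (q j) := by
        funext i; simp [hcQ, Finset.sum_apply]
      rw [h1, dot_sum_right]
      refine Finset.sum_eq_zero fun j _ => ?_
      rw [dot_smul_right, hjz j, mul_zero]
    funext b
    obtain ⟨x, y, hxy⟩ := hspan (Pi.single b 1)
    have hsb : (Pi.single b 1 : ι → ℚ) = cQ (Pi.single b 1) := by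
      funext c
      simp only [hcQ, Pi.single_apply]
      split <;> simp
    have : dot φ (Pi.single b 1) = 0 := by
      rw [hsb, hxy, cQ_sub, dot_sub_right, hdotP, hdotP, sub_zero]
    rw [dot_single_right] at this
    simp [this]
  set lf' : List (ι → ℚ) := lf.filter (fun φ => decide (0 < dot φ (cQ u))) with hlf'def
  have hmem_lf' : ∀ φ, φ ∈ lf' ↔ φ ∈ lf ∧ 0 < dot φ (cQ u) := by
    intro φ; rw [hlf'def, List.mem_filter]; simp
  have hiff : ∀ y, inCone genList y ↔ ∀ φ ∈ lf', 0 ≤ dot φ y := by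
    intro y
    constructor
    · intro hy φ hφ
      exact (hlf y).1 hy φ ((hmem_lf' φ).1 hφ).1
    · intro hy
      rw [hlf]
      intro φ hφ
      by_cases hpos : 0 < dot φ (cQ u)
      · exact hy φ ((hmem_lf' φ).2 ⟨hφ, hpos⟩)
      · have h0 : dot φ (cQ u) = 0 :=
          le_antisymm (not_lt.1 hpos) ((hlf (cQ u)).1 hu_cone φ hφ)
        rw [hzero φ hφ h0, dot_zero_left]
  set r := lf'.length with hr
  set φi : Fin r → (ι → ℚ) := fun i => lf'.get i with hφi
  have hφi_mem : ∀ i, φi i ∈ lf' := fun i => List.get_mem lf' i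
  have hφi_surj : ∀ φ ∈ lf', ∃ i, φi i = φ := by
    intro φ hφ
    obtain ⟨i, hi⟩ := List.mem_iff_get.1 hφ
    exact ⟨i, hi⟩
  set ci : Fin r → ℚ := fun i => dot (φi i) (cQ u) with hci
  have hci_pos : ∀ i, 0 < ci i := fun i => ((hmem_lf' _).1 (hφi_mem i)).2
  set Kd : ℕ := ∏ i : Fin r, ∏ b : ι, ((φi i b) / (ci i)).den with hKd
  have hKd_pos : 0 < Kd := by
    rw [hKd]
    exact Finset.prod_pos fun i _ => Finset.prod_pos fun b _ => (φi i b / ci i).pos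
  have hint : ∀ (i : Fin r) (b : ι), ∃ m : ℤ, (Kd : ℚ) * ((φi i b) / (ci i)) = (m : ℚ) := by
    intro i b
    have hdvd : ((φi i b) / (ci i)).den ∣ Kd := by
      rw [hKd]
      exact dvd_trans
        (Finset.dvd_prod_of_mem (fun b' => ((φi i b') / (ci i)).den) (Finset.mem_univ b))
        (Finset.dvd_prod_of_mem (fun i' => ∏ b', ((φi i' b') / (ci i')).den) (Finset.mem_univ i))
    obtain ⟨t, ht⟩ := hdvd
    refine ⟨(t : ℤ) * ((φi i b) / (ci i)).num, ?_⟩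
    rw [ht]
    push_cast
    linear_combination (t : ℚ) * ratden ((φi i b) / (ci i))
  set Mi : Fin r → ι → ℤ := fun i b => Classical.choose (hint i b) with hMi
  have hMi_spec : ∀ i b, ((Mi i b : ℤ) : ℚ) = (Kd : ℚ) * ((φi i b) / (ci i)) :=
    fun i b => (Classical.choose_spec (hint i b)).symm
  set ξ : (ι → ℤ) → Fin r → ℤ := fun z i => ∑ b, Mi i b * z b with hξ
  have cast_ξ : ∀ (z : ι → ℤ) (i : Fin r),
      ((ξ z i : ℤ) : ℚ) = (Kd : ℚ) / (ci i) * dot (φi i) (cQ z) := by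
    intro z i
    show ((∑ b, Mi i b * z b : ℤ) : ℚ) = (Kd : ℚ) / (ci i) * dot (φi i) (cQ z)
    push_cast
    rw [dot, Finset.mul_sum]
    refine Finset.sum_congr rfl fun b _ => ?_
    rw [hMi_spec]
    have hc := (hci_pos i).ne'
    show (Kd : ℚ) * (φi i b / ci i) * (z b : ℚ) = (Kd : ℚ) / ci i * (φi i b * cQ z b)
    have : cQ z b = (z b : ℚ) := rfl
    rw [this]
    field_simp
  have ξ_add : ∀ (y z : ι → ℤ) (i : Fin r), ξ (y + z) i = ξ y i + ξ z i := by
    intro y z i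
    show (∑ b, Mi i b * (y b + z b)) = (∑ b, Mi i b * y b) + ∑ b, Mi i b * z b
    rw [← Finset.sum_add_distrib]
    exact Finset.sum_congr rfl fun b _ => by ring
  have ξ_neg : ∀ (z : ι → ℤ) (i : Fin r), ξ (-z) i = -ξ z i := by
    intro z i
    show (∑ b, Mi i b * (-(z b))) = -∑ b, Mi i b * z b
    rw [← Finset.sum_neg_distrib]
    exact Finset.sum_congr rfl fun b _ => by ring
  have ξ_sub : ∀ (y z : ι → ℤ) (i : Fin r), ξ (y - z) i = ξ y i - ξ z i := by
    intro y z i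
    have : y - z = y + (-z) := by abel
    rw [this, ξ_add, ξ_neg]
    ring
  have ξ_zero : ∀ i : Fin r, ξ 0 i = 0 := by
    intro i
    show (∑ b, Mi i b * (0:ℤ)) = 0
    simp
  have F1 : ∀ (x : P) (i : Fin r), 0 ≤ ξ (emb x) i := by
    intro x i
    have h := (hiff (cQ (emb x))).1 (hconeP x) (φi i) (hφi_mem i)
    have hc := hci_pos i
    have : (0 : ℚ) ≤ ((ξ (emb x) i : ℤ) : ℚ) := by
      rw [cast_ξ]
      positivity
    exact_mod_cast this
  have F2 : ∀ i : Fin r, ξ u i = (Kd : ℤ) := by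
    intro i
    have : ((ξ u i : ℤ) : ℚ) = ((Kd : ℤ) : ℚ) := by
      rw [cast_ξ]
      have hc := (hci_pos i).ne'
      have : dot (φi i) (cQ u) = ci i := rfl
      rw [this]
      push_cast
      field_simp
    exact_mod_cast this
  have F3 : ∀ (z : ι → ℤ) (k : ℤ), (∀ i, 0 ≤ ξ z i + k) →
      inCone genList (cQ ((Kd : ℤ) • z + k • u)) := by
    intro z k hzk
    apply (hiff _).2
    intro φ hφ
    obtain ⟨i, rfl⟩ := hφi_surj φ hφ
    rw [cQ_add, dot_add_right, cQ_zsmul, cQ_zsmul, dot_smul_right, dot_smul_right]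
    have hone : dot (φi i) (cQ z) = (ci i) / (Kd : ℚ) * ((ξ z i : ℤ) : ℚ) := by
      rw [cast_ξ]
      have hc := (hci_pos i).ne'
      have hk : (Kd : ℚ) ≠ 0 := by positivity
      field_simp
    have hcu : dot (φi i) (cQ u) = ci i := rfl
    rw [hone, hcu]
    have h1 : (0 : ℚ) ≤ ((ξ z i : ℤ) : ℚ) + (k : ℚ) := by exact_mod_cast hzk i
    have hk : (Kd : ℚ) ≠ 0 := by positivity
    have e : ((Kd : ℤ) : ℚ) * ((ci i) / (Kd : ℚ) * ((ξ z i : ℤ) : ℚ)) + (k : ℚ) * ci i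
        = ci i * (((ξ z i : ℤ) : ℚ) + (k : ℚ)) := by
      push_cast
      field_simp
    rw [e]
    exact mul_nonneg (le_of_lt (hci_pos i)) h1
  have F4 : ∀ (z : ι → ℤ) (k : ℤ), (∀ i, ξ z i + k = 0) → (Kd : ℤ) • z + k • u = 0 := by
    intro z k h0
    apply hpm
    · exact F3 z k fun i => le_of_eq (h0 i).symm
    · have h2 := F3 (-z) (-k) fun i => by rw [ξ_neg]; have := h0 i; omega
      have e : (Kd : ℤ) • (-z) + (-k) • u = -((Kd : ℤ) • z + k • u) := by
        rw [smul_neg, neg_smul]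
        abel
      rwa [e] at h2
  -- the submonoid Qs of ℕ^r
  set Qs : AddSubmonoid (Fin r → ℕ) :=
    { carrier := {v | ∃ (z : ι → ℤ) (k : ℤ), ∀ i, (v i : ℤ) = ξ z i + k}
      zero_mem' := ⟨0, 0, fun i => by rw [ξ_zero]; simp⟩
      add_mem' := by
        rintro a b ⟨za, ka, hza⟩ ⟨zb, kb, hzb⟩
        refine ⟨za + zb, ka + kb, fun i => ?_⟩
        rw [ξ_add]
        have h1 := hza i
        have h2 := hzb i
        push_cast [Pi.add_apply]
        omega } with hQs
  have memQs : ∀ v, v ∈ Qs ↔ ∃ (z : ι → ℤ) (k : ℤ), ∀ i, (v i : ℤ) = ξ z i + k :=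
    fun v => Iff.rfl
  have hdiff : ∀ x a b : Fin r → ℕ, a ∈ Qs → b ∈ Qs → x + b = a → x ∈ Qs := by
    rintro x a b ⟨za, ka, hza⟩ ⟨zb, kb, hzb⟩ hxy
    refine ⟨za - zb, ka - kb, fun i => ?_⟩
    rw [ξ_sub]
    have h1 := hza i
    have h2 := hzb i
    have h3 : (x i : ℤ) + (b i : ℤ) = (a i : ℤ) := by
      have := congrFun hxy i
      simp only [Pi.add_apply] at this
      exact_mod_cast this
    omega
  have hQsFG : Qs.FG := fg_of_diff_closed Qs hdiff
  have honemem : (fun _ => 1 : Fin r → ℕ) ∈ Qs := ⟨0, 1, fun i => by rw [ξ_zero]; simp⟩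
  -- the map F underlying f
  set F : P → (Fin r → ℕ) := fun x i => (ξ (emb x) i).toNat with hF
  have hFcast : ∀ x i, ((F x i : ℕ) : ℤ) = ξ (emb x) i := fun x i => Int.toNat_of_nonneg (F1 x i)
  have hFQ : ∀ x, F x ∈ Qs := fun x => ⟨emb x, 0, fun i => by rw [hFcast]; ring⟩
  have hFadd : ∀ x y, F (x * y) = F x + F y := by
    intro x y
    funext i
    have h : ((F (x * y) i : ℕ) : ℤ) = ((F x i + F y i : ℕ) : ℤ) := by
      rw [hFcast, emb_mul, ξ_add]
      push_cast
      rw [hFcast, hFcast]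
    exact_mod_cast h
  have hFone : F 1 = 0 := by
    funext i
    have h : ((F 1 i : ℕ) : ℤ) = 0 := by rw [hFcast, emb_one, ξ_zero]
    simpa using h
  -- ζ: a well-defined "linear section" on Qs
  have hζwd : ∀ (z : ι → ℤ) (k : ℤ) (z' : ι → ℤ) (k' : ℤ),
      (∀ i, ξ z i + k = ξ z' i + k') → (Kd : ℤ) • z + k • u = (Kd : ℤ) • z' + k' • u := by
    intro z k z' k' h
    have h4 := F4 (z - z') (k - k') (fun i => by rw [ξ_sub]; have := h i; omega)
    have he : (Kd : ℤ) • (z - z') + (k - k') • u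
        = ((Kd : ℤ) • z + k • u) - ((Kd : ℤ) • z' + k' • u) := by
      rw [smul_sub, sub_smul]; abel
    rw [he] at h4
    exact sub_eq_zero.1 h4
  set ζ : (Fin r → ℕ) → (ι → ℤ) := fun v =>
    if h : ∃ (z : ι → ℤ) (k : ℤ), ∀ i, (v i : ℤ) = ξ z i + k
    then (Kd : ℤ) • h.choose + h.choose_spec.choose • u else 0 with hζ
  have hζspec : ∀ (v : Fin r → ℕ) (z : ι → ℤ) (k : ℤ), (∀ i, (v i : ℤ) = ξ z i + k) →
      ζ v = (Kd : ℤ) • z + k • u := by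
    intro v z k hv
    have hex : ∃ (z : ι → ℤ) (k : ℤ), ∀ i, (v i : ℤ) = ξ z i + k := ⟨z, k, hv⟩
    simp only [hζ]
    rw [dif_pos hex]
    refine hζwd _ _ _ _ fun i => ?_
    have h1 := hex.choose_spec.choose_spec i
    have h2 := hv i
    omega
  have hζc : ∀ v ∈ Qs, inCone genList (cQ (ζ v)) := by
    rintro v ⟨z, k, hv⟩
    rw [hζspec v z k hv]
    refine F3 z k fun i => ?_
    have h1 := hv i
    have h2 : (0 : ℤ) ≤ (v i : ℤ) := Int.ofNat_nonneg _
    omega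
  have hζadd : ∀ v w, v ∈ Qs → w ∈ Qs → ζ (v + w) = ζ v + ζ w := by
    rintro v w ⟨zv, kv, hv⟩ ⟨zw, kw, hw⟩
    rw [hζspec v zv kv hv, hζspec w zw kw hw,
      hζspec (v + w) (zv + zw) (kv + kw) (fun i => by
        have h1 := hv i
        have h2 := hw i
        rw [ξ_add]
        push_cast [Pi.add_apply]
        omega)]
    rw [smul_add, add_smul]
    abel
  have hζzero : ζ 0 = 0 := by
    rw [hζspec 0 0 0 (fun i => by rw [ξ_zero]; simp)]
    simp
  -- finding the uniform multiplier m
  have hgenw : ∀ w ∈ genList, ∃ xp : P, w = cQ (emb xp) := by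
    intro w hw
    rw [hgen, List.mem_ofFn] at hw
    obtain ⟨j, rfl⟩ := hw
    exact ⟨p j, rfl⟩
  obtain ⟨T, hT⟩ := hQsFG
  have hTQ : ∀ t ∈ T, (t : Fin r → ℕ) ∈ Qs := fun t ht => hT ▸ AddSubmonoid.subset_closure ht
  have hex' : ∀ t : Fin r → ℕ, ∃ mt : ℕ, 0 < mt ∧ ∃ x : P,
      (t ∈ Qs → (mt : ℤ) • ζ t = emb x) := by
    intro t
    by_cases ht : t ∈ Qs
    · obtain ⟨mt, hmt, x, hx⟩ := hclear genList hgenw _ (hζc t ht)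
      refine ⟨mt, hmt, x, fun _ => ?_⟩
      apply cQ_inj
      rw [cQ_zsmul, ← hx]
      push_cast
      rfl
    · exact ⟨1, one_pos, 1, fun h => absurd h ht⟩
  choose mf hmf xf hxf using hex'
  set m : ℕ := ∏ t ∈ T, mf t with hm
  have hmpos : 0 < m := Finset.prod_pos fun t _ => hmf t
  have hTgen : ∀ t ∈ T, ∃ x : P, emb x = (m : ℤ) • ζ t := by
    intro t ht
    refine ⟨xf t ^ (∏ x ∈ T.erase t, mf x), ?_⟩
    rw [emb_pow, ← hxf t (hTQ t ht), smul_smul]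
    congr 1
    rw [hm, ← Finset.mul_prod_erase T mf ht]
    push_cast
    ring
  have key : ∀ v, v ∈ AddSubmonoid.closure (T : Set (Fin r → ℕ)) →
      v ∈ Qs ∧ ∃ x : P, emb x = (m : ℤ) • ζ v := by
    intro v hvc
    induction hvc using AddSubmonoid.closure_induction with
    | mem t ht => exact ⟨hTQ t ht, hTgen t ht⟩
    | zero => exact ⟨Qs.zero_mem, 1, by rw [emb_one, hζzero, smul_zero]⟩
    | add a b _ _ hA hB =>
      obtain ⟨haQ, x, hx⟩ := hA
      obtain ⟨hbQ, y, hy⟩ := hB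
      exact ⟨Qs.add_mem haQ hbQ, x * y,
        by rw [emb_mul, hζadd a b haQ hbQ, smul_add, hx, hy]⟩
  have hG : ∀ v ∈ Qs, ∃ x : P, emb x = (m : ℤ) • ζ v := by
    intro v hv
    exact (key v (by rw [hT]; exact hv)).2
  -- final packaging
  refine ⟨r, AddSubmonoid.toSubmonoid Qs, ?_, ?_, ?_, ?_⟩
  · rw [Monoid.fg_iff_submonoid_fg]
    exact (AddSubmonoid.fg_iff_mul_fg Qs).1 ⟨T, hT⟩
  · exact honemem
  · rintro x ⟨a, ha, b, hb, hab⟩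
    exact hdiff x.toAdd a.toAdd b.toAdd ha hb (congrArg Multiplicative.toAdd hab)
  · have hGch : ∀ v : ↥(AddSubmonoid.toSubmonoid Qs), ∃ x : P,
        emb x = (m : ℤ) • ζ (Multiplicative.toAdd v.1) := fun v => hG _ v.2
    refine ⟨m * Kd,
      { toFun := fun x => ⟨Multiplicative.ofAdd (F x), hFQ x⟩
        map_one' := Subtype.ext (by show Multiplicative.ofAdd (F 1) = 1; rw [hFone]; rfl)
        map_mul' := fun x y => Subtype.ext (by
          show Multiplicative.ofAdd (F (x * y)) = _
          rw [hFadd]; rfl) },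
      { toFun := fun v => (hGch v).choose
        map_one' := emb_inj _ _ (by
          rw [(hGch 1).choose_spec, emb_one]
          show (m : ℤ) • ζ 0 = 0
          rw [hζzero, smul_zero])
        map_mul' := fun v w => emb_inj _ _ (by
          rw [(hGch (v * w)).choose_spec, emb_mul, (hGch v).choose_spec, (hGch w).choose_spec,
            ← smul_add, ← hζadd (Multiplicative.toAdd (v : Multiplicative (Fin r → ℕ)))
              (Multiplicative.toAdd (w : Multiplicative (Fin r → ℕ))) v.2 w.2]
          rfl) },
      by positivity, fun x => ?_⟩
    apply emb_inj
    show emb _ = emb (x ^ (m * Kd))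
    rw [(hGch _).choose_spec, emb_pow]
    show (m : ℤ) • ζ (F x) = ((m * Kd : ℕ) : ℤ) • emb x
    rw [hζspec (F x) (emb x) 0 (fun i => by rw [hFcast]; ring), zero_smul, add_zero,
      smul_smul]
    norm_cast


end Stmt13

/-- Let `P` be a fine and sharp monoid with torsion-free groupification.  Then there are an
integer `r ≥ 0`, a fine saturated submonoid `Q ⊆ ℕ^r` containing `(1,…,1)` and satisfying
`Q = ℕ^r ∩ Q^gp`, an integer `N > 0` and morphisms `f : P → Q`, `g : Q → P` with
`g (f x) = x ^ N` for all `x ∈ P`. -/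
theorem stmt13 {P : Type*} [CancelCommMonoid P] (hfg : Monoid.FG P)
    (hsharp : ∀ x : P, IsUnit x → x = 1)
    (htf : ∀ a b : P, ∀ n : ℕ, 0 < n → a ^ n = b ^ n → a = b) :
    ∃ (r : ℕ) (Q : Submonoid (Multiplicative (Fin r → ℕ))),
      Monoid.FG ↥Q ∧
      Multiplicative.ofAdd (fun _ => (1 : ℕ)) ∈ Q ∧
      (∀ x : Multiplicative (Fin r → ℕ), (∃ a ∈ Q, ∃ b ∈ Q, x * b = a) → x ∈ Q) ∧
      ∃ (N : ℕ) (f : P →* ↥Q) (g : ↥Q →* P), 0 < N ∧ ∀ x : P, g (f x) = x ^ N := by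
  exact Stmt13.main hfg hsharp htf
end

section
/- Let λ: P → Q be a morphism of fine monoids such that λ^gp: P^gp → Q^gp is an isomorphism, let F ⊂ Q be a face, and let λ_F: F ∩ P → F denote the inclusion-induced map (where F ∩ P := λ^{-1}(F)). Then: (i) the natural map Coker(λ_F^gp) → P^gp/(F∩P)^gp is injective; (ii) if moreover P is saturated, then Coker(λ_F^gp) is a free abelian group of finite rank. -/
/-- Let `λ : P → Q` be a morphism of fine monoids with `λ^gp` an isomorphism (encoded via a
groupification `jQ : Q → G` of `Q` such that `jQ ∘ λ` is also a groupification of `P`),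
and `F ⊆ Q` a face.  Then:
(i) the natural map `Coker(λ_F^gp) → P^gp/(F∩P)^gp` is injective, where
`λ_F : F∩P := λ⁻¹F → F`; and
(ii) if moreover `P` is saturated, then `Coker(λ_F^gp)` is a free abelian group of finite
rank.  Here `F^gp` and `(F∩P)^gp` are realized as the subgroups of `G` generated by the
images of `F` and `λ(λ⁻¹F)` respectively. -/
theorem stmt17 {P Q G : Type*} [CancelCommMonoid P] [CancelCommMonoid Q]
    (hPfg : Monoid.FG P) (hQfg : Monoid.FG Q)
    (l : P →* Q) [CommGroup G] (jQ : Q →* G)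
    (hjinj : Function.Injective jQ)
    (hjgen : ∀ g : G, ∃ a b : Q, g = jQ a * (jQ b)⁻¹)
    (hgp_surj : ∀ g : G, ∃ a b : P, g = jQ (l a) * (jQ (l b))⁻¹)
    (hgp_inj : ∀ a b : P, jQ (l a) = jQ (l b) → a = b)
    (F : Submonoid Q) (hface : ∀ x y : Q, x * y ∈ F → x ∈ F ∧ y ∈ F) :
    let Agp : Subgroup G := Subgroup.closure (⇑jQ '' ↑F)
    let Bgp : Subgroup G := Subgroup.closure (⇑jQ '' (⇑l '' (⇑l ⁻¹' ↑F)))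
    Function.Injective
        (QuotientGroup.map (Bgp.subgroupOf Agp) Bgp Agp.subtype (fun x hx => hx)) ∧
      ((∀ a b : P, ∀ n : ℕ, 0 < n → (∃ c, a ^ n = b ^ n * c) → ∃ d, a = b * d) →
        ∃ r : ℕ, Nonempty ((↥Agp ⧸ Bgp.subgroupOf Agp) ≃* Multiplicative (Fin r → ℤ))) := by
  intro Agp Bgp
  -- membership description of Agp
  have hAmem : ∀ x : G, x ∈ Agp ↔ ∃ a b : Q, a ∈ F ∧ b ∈ F ∧ x = jQ a * (jQ b)⁻¹ := by
    intro x
    constructor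
    · intro hx
      refine Subgroup.closure_induction ?_ ?_ ?_ ?_ hx
      · rintro _ ⟨a, ha, rfl⟩
        exact ⟨a, 1, ha, F.one_mem, by simp⟩
      · exact ⟨1, 1, F.one_mem, F.one_mem, by simp⟩
      · rintro x y hx' hy' ⟨a, b, ha, hb, rfl⟩ ⟨c, d, hc, hd, rfl⟩
        exact ⟨a * c, b * d, F.mul_mem ha hc, F.mul_mem hb hd, by
          rw [map_mul, map_mul]; simp [Nat.succ_eq_add_one, mul_pow, inv_pow, mul_inv, mul_comm, mul_left_comm, mul_assoc]⟩
      · rintro x hx' ⟨a, b, ha, hb, rfl⟩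
        exact ⟨b, a, hb, ha, by simp [Nat.succ_eq_add_one, mul_pow, inv_pow, mul_inv, mul_comm, mul_left_comm, mul_assoc]⟩
    · rintro ⟨a, b, ha, hb, rfl⟩
      exact mul_mem (Subgroup.subset_closure ⟨a, ha, rfl⟩)
        (inv_mem (Subgroup.subset_closure ⟨b, hb, rfl⟩))
  -- membership description of Bgp
  have hBmem : ∀ x : G,
      x ∈ Bgp ↔ ∃ p q : P, l p ∈ F ∧ l q ∈ F ∧ x = jQ (l p) * (jQ (l q))⁻¹ := by
    intro x
    constructor
    · intro hx
      refine Subgroup.closure_induction ?_ ?_ ?_ ?_ hx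
      · rintro _ ⟨_, ⟨p, hp, rfl⟩, rfl⟩
        exact ⟨p, 1, hp, by simpa using F.one_mem, by simp⟩
      · exact ⟨1, 1, by simpa using F.one_mem, by simpa using F.one_mem, by simp⟩
      · rintro x y hx' hy' ⟨a, b, ha, hb, rfl⟩ ⟨c, d, hc, hd, rfl⟩
        refine ⟨a * c, b * d, ?_, ?_, ?_⟩
        · rw [map_mul]; exact F.mul_mem ha hc
        · rw [map_mul]; exact F.mul_mem hb hd
        · rw [map_mul, map_mul, map_mul, map_mul]; simp [Nat.succ_eq_add_one, mul_pow, inv_pow, mul_inv, mul_comm, mul_left_comm, mul_assoc]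
      · rintro x hx' ⟨a, b, ha, hb, rfl⟩
        exact ⟨b, a, hb, ha, by simp [Nat.succ_eq_add_one, mul_pow, inv_pow, mul_inv, mul_comm, mul_left_comm, mul_assoc]⟩
    · rintro ⟨p, q, hp, hq, rfl⟩
      exact mul_mem (Subgroup.subset_closure ⟨l p, ⟨p, hp, rfl⟩, rfl⟩)
        (inv_mem (Subgroup.subset_closure ⟨l q, ⟨q, hq, rfl⟩, rfl⟩))
  constructor
  · -- (i) injectivity
    rw [injective_iff_map_eq_one]
    intro z hz
    obtain ⟨a, rfl⟩ := QuotientGroup.mk_surjective z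
    change (QuotientGroup.mk (Agp.subtype a) : G ⧸ Bgp) = 1 at hz
    rw [QuotientGroup.eq_one_iff] at hz
    rw [QuotientGroup.eq_one_iff]
    exact hz
  · -- (ii) freeness
    intro hsat
    -- key: Agp/Bgp is torsion free
    have key : ∀ x : G, x ∈ Agp → ∀ n : ℕ, 0 < n → x ^ n ∈ Bgp → x ∈ Bgp := by
      intro x hxA n hn hxn
      obtain ⟨a, b, rfl⟩ := hgp_surj x
      obtain ⟨p, q, hp, hq, heq⟩ := (hBmem _).1 hxn
      obtain ⟨m, rfl⟩ := Nat.exists_eq_succ_of_ne_zero hn.ne'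
      -- turn heq into an equation in P
      have e2 : jQ (l a) ^ (m + 1) * (jQ (l b) ^ (m + 1))⁻¹ = jQ (l p) * (jQ (l q))⁻¹ := by
        rw [← heq]; simp [Nat.succ_eq_add_one, mul_pow, inv_pow, mul_inv, mul_comm, mul_left_comm, mul_assoc]
      have h1 : a ^ (m + 1) * q = b ^ (m + 1) * p := by
        apply hgp_inj
        have : jQ (l a) ^ (m + 1) * jQ (l q) = jQ (l b) ^ (m + 1) * jQ (l p) :=
          calc jQ (l a) ^ (m + 1) * jQ (l q)
              = jQ (l a) ^ (m + 1) * (jQ (l b) ^ (m + 1))⁻¹ * jQ (l q) * jQ (l b) ^ (m + 1) := by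
                simp [Nat.succ_eq_add_one, mul_pow, inv_pow, mul_inv, mul_comm, mul_left_comm, mul_assoc]
            _ = jQ (l p) * (jQ (l q))⁻¹ * jQ (l q) * jQ (l b) ^ (m + 1) := by rw [e2]
            _ = jQ (l b) ^ (m + 1) * jQ (l p) := by simp [Nat.succ_eq_add_one, mul_pow, inv_pow, mul_inv, mul_comm, mul_left_comm, mul_assoc]
        simpa [map_mul, map_pow] using this
      -- saturation gives d with a * q = b * d
      obtain ⟨d, hd⟩ := hsat (a * q) b (m + 1) (Nat.succ_pos m)
        ⟨p * q ^ m, by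
          calc (a * q) ^ (m + 1) = a ^ (m + 1) * q ^ (m + 1) := mul_pow a q (m + 1)
            _ = (a ^ (m + 1) * q) * q ^ m := by
                rw [pow_succ q m]
                simp [mul_comm, mul_left_comm, mul_assoc]
            _ = (b ^ (m + 1) * p) * q ^ m := by rw [h1]
            _ = b ^ (m + 1) * (p * q ^ m) := by rw [mul_assoc]⟩
      -- rewrite x
      have hx' : jQ (l a) * (jQ (l b))⁻¹ = jQ (l d) * (jQ (l q))⁻¹ := by
        have h2 : jQ (l (a * q)) = jQ (l (b * d)) := by rw [hd]
        rw [map_mul, map_mul, map_mul, map_mul] at h2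
        rw [← div_eq_mul_inv, ← div_eq_mul_inv, div_eq_div_iff_mul_eq_mul]
        exact h2.trans (mul_comm _ _)
      -- show l d ∈ F using that x ∈ Agp and F is a face
      obtain ⟨f1, f2, hf1, hf2, hf⟩ := (hAmem _).1 hxA
      have hQeq : l d * f2 = f1 * l q := by
        apply hjinj
        have : jQ (l d) * (jQ (l q))⁻¹ = jQ f1 * (jQ f2)⁻¹ := by rw [← hx', hf]
        rw [map_mul, map_mul]
        calc jQ (l d) * jQ f2
            = jQ (l d) * (jQ (l q))⁻¹ * jQ f2 * jQ (l q) := by simp [Nat.succ_eq_add_one, mul_pow, inv_pow, mul_inv, mul_comm, mul_left_comm, mul_assoc]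
          _ = jQ f1 * (jQ f2)⁻¹ * jQ f2 * jQ (l q) := by rw [this]
          _ = jQ f1 * jQ (l q) := by simp [Nat.succ_eq_add_one, mul_pow, inv_pow, mul_inv, mul_comm, mul_left_comm, mul_assoc]
      have hld : l d ∈ F := (hface _ _ (by rw [hQeq]; exact F.mul_mem hf1 hq)).1
      exact (hBmem _).2 ⟨d, q, hld, hq, hx'⟩
    -- Agp is finitely generated
    obtain ⟨S, hS⟩ := hQfg.fg_top
    have hFsub : (F : Set Q) ⊆ ↑(Submonoid.closure ((S : Set Q) ∩ ↑F)) := by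
      intro f hf
      have hf' : f ∈ Submonoid.closure (S : Set Q) := by rw [hS]; trivial
      refine Submonoid.closure_induction (motive := fun x _ =>
          x ∈ F → x ∈ Submonoid.closure ((S : Set Q) ∩ ↑F)) ?_ ?_ ?_ hf' hf
      · intro x hx hxF
        exact Submonoid.subset_closure ⟨hx, hxF⟩
      · intro _
        exact Submonoid.one_mem _
      · intro x y _ _ ihx ihy hxy
        obtain ⟨hx, hy⟩ := hface x y hxy
        exact Submonoid.mul_mem _ (ihx hx) (ihy hy)
    have hAgpEq : Agp = Subgroup.closure (⇑jQ '' ((S : Set Q) ∩ ↑F)) := by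
      apply le_antisymm
      · apply Subgroup.closure_le _ |>.2
        rintro _ ⟨f, hf, rfl⟩
        have hf' := hFsub hf
        refine Submonoid.closure_induction (motive := fun x _ =>
            jQ x ∈ Subgroup.closure (⇑jQ '' ((S : Set Q) ∩ ↑F))) ?_ ?_ ?_ hf'
        · intro x hx
          exact Subgroup.subset_closure ⟨x, hx, rfl⟩
        · simpa using one_mem (Subgroup.closure (⇑jQ '' ((S : Set Q) ∩ ↑F)))
        · intro x y _ _ ihx ihy
          simpa [map_mul] using mul_mem ihx ihy
      · apply Subgroup.closure_mono
        exact Set.image_mono Set.inter_subset_right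
    have hAfg : Agp.FG := by
      rw [Subgroup.fg_iff]
      exact ⟨⇑jQ '' ((S : Set Q) ∩ ↑F), hAgpEq.symm,
        ((S.finite_toSet.inter_of_left _).image _)⟩
    haveI : Group.FG ↥Agp := (Group.fg_iff_subgroup_fg Agp).2 hAfg
    haveI : Group.FG (↥Agp ⧸ Bgp.subgroupOf Agp) := QuotientGroup.fg _
    set M := Additive (↥Agp ⧸ Bgp.subgroupOf Agp) with hM
    haveI : Module.Finite ℤ M :=
      Module.Finite.iff_addGroup_fg.mpr (GroupFG.iff_add_fg.mp inferInstance)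
    haveI : NoZeroSMulDivisors ℤ M := by
      refine ⟨fun {n x} h => ?_⟩
      by_cases hn : n = 0
      · exact Or.inl hn
      · right
        set y := Additive.toMul x with hy
        have hyn : y ^ n = 1 := by
          rw [hy, ← toMul_zsmul, h]; rfl
        have hym : y ^ n.natAbs = 1 := by
          have h1 : y ^ (n.natAbs : ℤ) = 1 := by
            rcases Int.natAbs_eq n with he | he
            · rw [← he]; exact hyn
            · rw [← neg_neg (n.natAbs : ℤ), ← he, zpow_neg, hyn, inv_one]
          rwa [zpow_natCast] at h1
        obtain ⟨z, hz⟩ := QuotientGroup.mk_surjective y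
        have hzn : ((z : ↥Agp) : G) ^ n.natAbs ∈ Bgp := by
          have : ((z ^ n.natAbs : ↥Agp) : ↥Agp ⧸ Bgp.subgroupOf Agp) = 1 := by
            rw [← hym, ← hz]
            rfl
          have h2 : z ^ n.natAbs ∈ Bgp.subgroupOf Agp := (QuotientGroup.eq_one_iff _).1 this
          simpa [Subgroup.mem_subgroupOf] using h2
        have hz' : ((z : ↥Agp) : G) ∈ Bgp :=
          key _ z.2 n.natAbs (Int.natAbs_pos.mpr hn) hzn
        have : y = 1 := by
          rw [← hz, QuotientGroup.eq_one_iff]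
          exact (Subgroup.mem_subgroupOf).2 hz'
        have : x = Additive.ofMul (1 : ↥Agp ⧸ Bgp.subgroupOf Agp) := by
          rw [← this, hy]; rfl
        simpa using this
    haveI : Module.Free ℤ M := Module.free_of_finite_type_torsion_free'
    refine ⟨Module.finrank ℤ M, ⟨?_⟩⟩
    exact AddEquiv.toMultiplicativeRight ((Module.finBasis ℤ M).equivFun.toAddEquiv)
end
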